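/- arXiv:0811.2583 — 4 statements merged into one kernel-verified Lean document; each statement's English description precedes it below -/
import Mathlib

section
/- Let α ∈ (1,2) and δ ∈ [0,1], and set g(T) = T^{1/α}·(log log T)^{δ−1/α} for T > e^e. Let f : [0,1] → ℝ be absolutely continuous with f(0) = 0 and derivative f′ ∈ L²[0,1]. Let (T_k)_{k≥1} be an increasing sequence with T₁ > e^e such that g is nondecreasing on [T₁, ∞). Then for every function x : [0,∞) → ℝ and every k, inf_{T∈[T_k, T_{k+1}]} sup_{s∈[0,1]} | x(Ts) − f(s)·g(T) | ≥ sup_{s∈[0,1]} | x(T_k s) − f(s)·g(T_k) | − ‖f‖_∞·( g(T_{k+1}) − g(T_k) ) − ‖f′‖_{L²}·(1 − T_k/T_{k+1})^{1/2}·g(T_k), where ‖f‖_∞ = sup_{s∈[0,1]}|f(s)| and ‖f′‖_{L²} = (∫₀¹ f′(t)² dt)^{1/2}. -/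
open MeasureTheory Filter Set Topology

noncomputable section

/-- Cauchy–Schwarz for the integral of an `L²` function over a subinterval of `[0,1]`. -/
lemma cs_bound (fd : ℝ → ℝ) (hfd : MemLp fd 2 (volume.restrict (Icc (0:ℝ) 1)))
    {a b : ℝ} (h0 : 0 ≤ a) (hab : a ≤ b) (hb1 : b ≤ 1) :
    |∫ u in a..b, fd u| ≤ Real.sqrt (∫ t in Icc (0:ℝ) 1, fd t ^ 2) * Real.sqrt (b - a) := by
  have hsub : Ioc a b ⊆ Icc (0:ℝ) 1 := fun y hy => ⟨h0.trans hy.1.le, hy.2.trans hb1⟩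
  have h2 : ENNReal.ofReal (2:ℝ) = 2 := by norm_num
  have hpq : (2:ℝ).HolderConjugate 2 := Real.HolderConjugate.two_two
  have hmem : MemLp fd (ENNReal.ofReal (2:ℝ)) (volume.restrict (Ioc a b)) := by
    rw [h2]
    exact hfd.mono_measure (Measure.restrict_mono hsub le_rfl)
  have hmem1 : MemLp (fun _ : ℝ => (1:ℝ)) (ENNReal.ofReal (2:ℝ)) (volume.restrict (Ioc a b)) :=
    memLp_const 1
  have hrpow : ∀ y : ℝ, ‖y‖ ^ (2:ℝ) = y ^ 2 := fun y => by
    rw [show (2:ℝ) = ((2:ℕ):ℝ) by norm_num, Real.rpow_natCast]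
    simp [Real.norm_eq_abs, sq_abs]
  have hsq_int : Integrable (fun t => fd t ^ 2) (volume.restrict (Icc (0:ℝ) 1)) :=
    hfd.integrable_sq
  calc |∫ u in a..b, fd u| = |∫ u in Ioc a b, fd u| := by
        rw [intervalIntegral.integral_of_le hab]
    _ ≤ ∫ u in Ioc a b, ‖fd u‖ := by
        exact (norm_integral_le_integral_norm fd)
    _ = ∫ u in Ioc a b, ‖fd u‖ * ‖(1:ℝ)‖ := by simp
    _ ≤ (∫ u in Ioc a b, ‖fd u‖ ^ (2:ℝ)) ^ (1/(2:ℝ)) *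
        (∫ u in Ioc a b, ‖(1:ℝ)‖ ^ (2:ℝ)) ^ (1/(2:ℝ)) :=
        integral_mul_norm_le_Lp_mul_Lq hpq hmem hmem1
    _ = (∫ u in Ioc a b, fd u ^ 2) ^ (1/(2:ℝ)) * (b - a) ^ (1/(2:ℝ)) := by
        congr 1
        · congr 1; exact integral_congr_ae (Filter.Eventually.of_forall fun y => hrpow _)
        · congr 1
          simp [Real.volume_Ioc, ENNReal.toReal_ofReal (sub_nonneg.2 hab), hab]
    _ ≤ (∫ t in Icc (0:ℝ) 1, fd t ^ 2) ^ (1/(2:ℝ)) * (b - a) ^ (1/(2:ℝ)) := by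
        gcongr
        exact Filter.Eventually.of_forall fun t => sq_nonneg _
    _ = Real.sqrt (∫ t in Icc (0:ℝ) 1, fd t ^ 2) * Real.sqrt (b - a) := by
        rw [Real.sqrt_eq_rpow, Real.sqrt_eq_rpow]

/-- Lemma 2(i) of the paper: for `g(T) = T^{1/α}(log log T)^{δ-1/α}`, an absolutely
continuous `f` with `f 0 = 0` and `f' ∈ L²`, an increasing sequence `T_k` with
`T 1 > e^e` on which `g` is nondecreasing, and ANY function `x`, the infimum over
`T ∈ [T_k, T_{k+1}]` of `sup_{s∈[0,1]} |x(Ts) - f(s)g(T)|` is at least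
`sup_s |x(T_k s) - f(s)g(T_k)| - ‖f‖_∞ (g(T_{k+1}) - g(T_k))
 - ‖f'‖_{L²} (1 - T_k/T_{k+1})^{1/2} g(T_k)`.
Suprema of (possibly unbounded) families are computed in `ℝ≥0∞` via `ENNReal.ofReal`. -/
theorem interpolation_infimum_lower_bound
    (α : ℝ) (hα : α ∈ Ioo (1:ℝ) 2) (δ : ℝ) (hδ : δ ∈ Icc (0:ℝ) 1)
    (g : ℝ → ℝ) (hg : g = fun T => T ^ (1/α) * (Real.log (Real.log T)) ^ (δ - 1/α))
    (fd : ℝ → ℝ) (hfd : MemLp fd 2 (volume.restrict (Icc (0:ℝ) 1)))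
    (f : ℝ → ℝ) (hf : ∀ s ∈ Icc (0:ℝ) 1, f s = ∫ u in (0:ℝ)..s, fd u)
    (T : ℕ → ℝ) (hT : StrictMono T) (hT1 : Real.exp (Real.exp 1) < T 1)
    (hgmono : MonotoneOn g (Ici (T 1)))
    (x : ℝ → ℝ) (k : ℕ) (hk : 1 ≤ k) :
    (⨆ s : Icc (0:ℝ) 1, ENNReal.ofReal |x (T k * s.1) - f s.1 * g (T k)|) -
        ENNReal.ofReal ((⨆ s : Icc (0:ℝ) 1, |f s.1|) * (g (T (k+1)) - g (T k))) -
        ENNReal.ofReal (Real.sqrt (∫ t in Icc (0:ℝ) 1, fd t ^ 2) *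
          Real.sqrt (1 - T k / T (k+1)) * g (T k)) ≤
      ⨅ Tt : Icc (T k) (T (k+1)), ⨆ s : Icc (0:ℝ) 1,
        ENNReal.ofReal |x (Tt.1 * s.1) - f s.1 * g Tt.1| := by
  have he : (0:ℝ) < Real.exp (Real.exp 1) := Real.exp_pos _
  have hT1k : T 1 ≤ T k := hT.monotone hk
  have heTk : Real.exp (Real.exp 1) < T k := lt_of_lt_of_le hT1 hT1k
  have hTkpos : (0:ℝ) < T k := he.trans heTk
  have hTkk : T k < T (k+1) := hT (Nat.lt_succ_self k)
  have hT1k1 : T 1 ≤ T (k+1) := hT1k.trans hTkk.le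
  -- nonnegativity of `g` on `[T 1, ∞)`
  have hgnn : ∀ t, T 1 ≤ t → 0 ≤ g t := by
    intro t ht
    have htpos : (0:ℝ) < t := he.trans (lt_of_lt_of_le hT1 ht)
    have hlog : 1 ≤ Real.log t := by
      have h1 : Real.exp 1 ≤ Real.log t := by
        rw [← Real.log_exp (Real.exp 1)]
        exact Real.log_le_log (Real.exp_pos _) (hT1.trans_le ht).le
      have h2 : (1:ℝ) ≤ Real.exp 1 := Real.one_le_exp (by norm_num)
      linarith
    rw [hg]
    exact mul_nonneg (Real.rpow_nonneg htpos.le _)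
      (Real.rpow_nonneg (Real.log_nonneg hlog) _)
  have hgknn : 0 ≤ g (T k) := hgnn _ hT1k
  have hInt : IntegrableOn fd (Icc (0:ℝ) 1) := hfd.integrable (by norm_num)
  set M := Real.sqrt (∫ t in Icc (0:ℝ) 1, fd t ^ 2) with hM
  -- `f` is bounded by `M` on `[0,1]`
  have hfle : ∀ s ∈ Icc (0:ℝ) 1, |f s| ≤ M := by
    intro s hs
    rw [hf s hs]
    calc |∫ u in (0:ℝ)..s, fd u| ≤ M * Real.sqrt (s - 0) :=
          cs_bound fd hfd le_rfl hs.1 hs.2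
      _ ≤ M * 1 := mul_le_mul_of_nonneg_left
          (by rw [sub_zero]; exact Real.sqrt_le_one.2 hs.2) (Real.sqrt_nonneg _)
      _ = M := mul_one M
  have hbdd : BddAbove (range fun s : Icc (0:ℝ) 1 => |f s.1|) :=
    ⟨M, by rintro y ⟨s, rfl⟩; exact hfle s.1 s.2⟩
  set C := ⨆ s : Icc (0:ℝ) 1, |f s.1| with hC
  have hCle : ∀ s ∈ Icc (0:ℝ) 1, |f s| ≤ C := fun s hs =>
    le_ciSup hbdd (⟨s, hs⟩ : Icc (0:ℝ) 1)
  have hC0 : 0 ≤ C := le_trans (abs_nonneg _) (hCle 0 (by norm_num))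
  rw [tsub_le_iff_right, tsub_le_iff_right]
  haveI : Nonempty (Icc (T k) (T (k+1))) := ⟨⟨T k, le_refl _, hTkk.le⟩⟩
  rw [ENNReal.iInf_add, ENNReal.iInf_add]
  refine le_iInf ?_
  rintro ⟨t, htk, htk1⟩
  refine iSup_le ?_
  rintro ⟨s, hs0, hs1⟩
  have htpos : (0:ℝ) < t := hTkpos.trans_le htk
  have hT1t : T 1 ≤ t := hT1k.trans htk
  set s' := s * (T k / t) with hs'
  have hr1 : T k / t ≤ 1 := div_le_one_of_le₀ htk htpos.le
  have hr0 : 0 ≤ T k / t := div_nonneg hTkpos.le htpos.le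
  have hs'0 : 0 ≤ s' := mul_nonneg hs0 hr0
  have hs's : s' ≤ s := by nlinarith
  have hs'1 : s' ≤ 1 := hs's.trans hs1
  have hts' : t * s' = T k * s := by
    rw [hs']; field_simp
  have hgt : g (T k) ≤ g t := hgmono (mem_Ici.2 hT1k) (mem_Ici.2 hT1t) htk
  have hgt1 : g t ≤ g (T (k+1)) := hgmono (mem_Ici.2 hT1t) (mem_Ici.2 hT1k1) htk1
  -- interval integrability
  have hints : IntervalIntegrable fd volume 0 s :=
    (hInt.mono_set (by rw [uIcc_of_le hs0]; exact Icc_subset_Icc le_rfl hs1)).intervalIntegrable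
  have hints' : IntervalIntegrable fd volume 0 s' :=
    (hInt.mono_set (by rw [uIcc_of_le hs'0]; exact Icc_subset_Icc le_rfl hs'1)).intervalIntegrable
  have hdiff : f s - f s' = ∫ u in s'..s, fd u := by
    rw [hf s ⟨hs0, hs1⟩, hf s' ⟨hs'0, hs'1⟩]
    exact intervalIntegral.integral_interval_sub_left hints hints'
  have hfd2 : |f s - f s'| ≤ M * Real.sqrt (1 - T k / T (k+1)) := by
    rw [hdiff]
    refine (cs_bound fd hfd hs'0 hs's hs1).trans ?_
    refine mul_le_mul_of_nonneg_left (Real.sqrt_le_sqrt ?_) (Real.sqrt_nonneg _)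
    have h1 : T k / T (k+1) ≤ T k / t := by gcongr
    nlinarith [mul_nonneg (sub_nonneg.2 hs1) (sub_nonneg.2 hr1)]
  -- the key real inequality
  have key : |x (T k * s) - f s * g (T k)| ≤ |x (t * s') - f s' * g t|
      + M * Real.sqrt (1 - T k / T (k+1)) * g (T k)
      + C * (g (T (k+1)) - g (T k)) := by
    have h1 : |x (T k * s) - f s * g (T k)| ≤
        |x (t * s') - f s' * g t| + |f s' * g t - f s * g (T k)| := by
      rw [← hts']
      exact abs_sub_le _ _ _
    have h2 : |f s' * g t - f s * g (T k)| ≤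
        |f s'| * (g t - g (T k)) + |f s - f s'| * g (T k) := by
      have heq : f s' * g t - f s * g (T k)
          = f s' * (g t - g (T k)) + (f s' - f s) * g (T k) := by ring
      rw [heq]
      refine (abs_add_le _ _).trans (le_of_eq ?_)
      rw [abs_mul, abs_mul, abs_of_nonneg (sub_nonneg.2 hgt), abs_of_nonneg hgknn,
        abs_sub_comm]
    have h3 : |f s'| * (g t - g (T k)) ≤ C * (g (T (k+1)) - g (T k)) :=
      mul_le_mul (hCle s' ⟨hs'0, hs'1⟩) (by linarith) (by linarith) hC0
    have h4 : |f s - f s'| * g (T k) ≤ M * Real.sqrt (1 - T k / T (k+1)) * g (T k) :=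
      mul_le_mul_of_nonneg_right hfd2 hgknn
    linarith
  calc ENNReal.ofReal |x (T k * s) - f s * g (T k)|
      ≤ ENNReal.ofReal (|x (t * s') - f s' * g t|
          + M * Real.sqrt (1 - T k / T (k+1)) * g (T k)
          + C * (g (T (k+1)) - g (T k))) := ENNReal.ofReal_le_ofReal key
    _ ≤ ENNReal.ofReal (|x (t * s') - f s' * g t|
          + M * Real.sqrt (1 - T k / T (k+1)) * g (T k))
          + ENNReal.ofReal (C * (g (T (k+1)) - g (T k))) := ENNReal.ofReal_add_le
    _ ≤ (ENNReal.ofReal |x (t * s') - f s' * g t|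
          + ENNReal.ofReal (M * Real.sqrt (1 - T k / T (k+1)) * g (T k)))
          + ENNReal.ofReal (C * (g (T (k+1)) - g (T k))) :=
        add_le_add_left ENNReal.ofReal_add_le _
    _ ≤ ((⨆ sb : Icc (0:ℝ) 1, ENNReal.ofReal |x (t * sb.1) - f sb.1 * g t|)
          + ENNReal.ofReal (M * Real.sqrt (1 - T k / T (k+1)) * g (T k)))
          + ENNReal.ofReal (C * (g (T (k+1)) - g (T k))) := by
        gcongr
        exact le_iSup (fun sb : Icc (0:ℝ) 1 => ENNReal.ofReal |x (t * sb.1) - f sb.1 * g t|)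
          (⟨s', hs'0, hs'1⟩ : Icc (0:ℝ) 1)
end
end

section
/- Let α ∈ (1,2) and δ ∈ [0,1], and define T_k = exp( k·(log k)^{−3} ) for k ≥ 2. Then: (a) lim_{k→∞} [ T_{k+1}^{1/α}·(log log T_{k+1})^{δ−1/α} − T_k^{1/α}·(log log T_k)^{δ−1/α} ] / ( T_{k+1} / log log T_{k+1} )^{1/α} = 0; (b) lim_{k→∞} (1 − T_k/T_{k+1})^{1/2}·T_k^{1/α}·(log log T_k)^{δ−1/α} / ( T_{k+1} / log log T_{k+1} )^{1/α} = 0; and (c) lim_{k→∞} T_k/T_{k+1} = 1. -/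
open MeasureTheory Filter Set Topology

noncomputable section

/-- `A k = k / (log k)^3`, so that `T k = exp (A k)`. -/
private def A (k : ℕ) : ℝ := (k : ℝ) / (Real.log (k : ℝ)) ^ 3

/-- `u k = log (A k) = log log (T k)`. -/
private def u (k : ℕ) : ℝ := Real.log (A k)

private lemma tendsto_log_nat : Tendsto (fun k : ℕ => Real.log (k : ℝ)) atTop atTop :=
  Real.tendsto_log_atTop.comp tendsto_natCast_atTop_atTop

private lemma tendsto_A : Tendsto A atTop atTop := by
  have h := (isLittleO_log_rpow_atTop (by norm_num : (0:ℝ) < 1/6)).def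
      (by norm_num : (0:ℝ) < 1)
  have h2 : ∀ᶠ x : ℝ in atTop, x ^ ((1:ℝ)/2) ≤ x / (Real.log x) ^ 3 := by
    filter_upwards [h, eventually_ge_atTop (1:ℝ),
      Real.tendsto_log_atTop.eventually_ge_atTop 1] with x hx hx1 hlx
    have hx0 : (0:ℝ) ≤ x := by linarith
    have hxr0 : (0:ℝ) ≤ x ^ ((1:ℝ)/6) := Real.rpow_nonneg hx0 _
    rw [Real.norm_eq_abs, Real.norm_eq_abs, one_mul, abs_of_nonneg (by linarith),
      abs_of_nonneg hxr0] at hx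
    have h3 : (Real.log x) ^ 3 ≤ (x ^ ((1:ℝ)/6)) ^ (3:ℕ) :=
      pow_le_pow_left₀ (by linarith) hx 3
    have h4 : (x ^ ((1:ℝ)/6)) ^ (3:ℕ) = x ^ ((1:ℝ)/2) := by
      rw [← Real.rpow_natCast (x ^ ((1:ℝ)/6)) 3, ← Real.rpow_mul hx0]
      norm_num
    have h5 : x ^ ((1:ℝ)/2) * x ^ ((1:ℝ)/2) = x := by
      rw [← Real.rpow_add (by linarith : (0:ℝ) < x)]
      norm_num
    have hlx3 : (0:ℝ) < (Real.log x) ^ 3 := by positivity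
    rw [le_div_iff₀ hlx3]
    calc x ^ ((1:ℝ)/2) * (Real.log x) ^ 3
        ≤ x ^ ((1:ℝ)/2) * x ^ ((1:ℝ)/2) := by
          apply mul_le_mul_of_nonneg_left _ (Real.rpow_nonneg hx0 _)
          rw [← h4] at *; linarith
      _ = x := h5
  have h3 : Tendsto (fun x : ℝ => x / (Real.log x) ^ 3) atTop atTop :=
    tendsto_atTop_mono' _ h2 (tendsto_rpow_atTop (by norm_num))
  exact h3.comp tendsto_natCast_atTop_atTop

private lemma tendsto_u : Tendsto u atTop atTop :=
  Real.tendsto_log_atTop.comp tendsto_A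

private lemma delta_bounds : ∀ᶠ k : ℕ in atTop,
    0 ≤ A (k+1) - A k ∧ A (k+1) - A k ≤ 1 / (Real.log (k : ℝ)) ^ 3 := by
  filter_upwards [tendsto_log_nat.eventually_ge_atTop 7, eventually_ge_atTop 1]
    with k hb7 hk1
  have hx1 : (1:ℝ) ≤ (k:ℝ) := by exact_mod_cast hk1
  have hxpos : (0:ℝ) < (k:ℝ) := by linarith
  have hbpos : (0:ℝ) < Real.log (k:ℝ) := by linarith
  have hcast : ((k+1:ℕ):ℝ) = (k:ℝ) + 1 := by push_cast; ring
  have hAk : A k = (k:ℝ) / (Real.log (k:ℝ)) ^ 3 := rfl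
  have hAk1 : A (k+1) = ((k:ℝ)+1) / (Real.log ((k:ℝ)+1)) ^ 3 := by
    simp only [A]; rw [hcast]
  set x := (k:ℝ)
  set b := Real.log x with hb
  set c := Real.log (x+1) with hc
  have hbc : b ≤ c := Real.log_le_log hxpos (by linarith)
  have hcpos : 0 < c := lt_of_lt_of_le hbpos hbc
  have hcb : c ≤ b + 1/x := by
    have h1 : Real.log ((x+1)/x) ≤ (x+1)/x - 1 :=
      Real.log_le_sub_one_of_pos (by positivity)
    have h2 : Real.log ((x+1)/x) = c - b := by
      rw [Real.log_div (by positivity) (by positivity)]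
    have h3 : (x+1)/x - 1 = 1/x := by field_simp; ring
    rw [h2, h3] at h1; linarith
  have hc3 : c ^ 3 ≤ (b + 1/x) ^ 3 := pow_le_pow_left₀ hcpos.le hcb 3
  have hexp : x * (b + 1/x) ^ 3 = x * b^3 + 3*b^2 + 3*b/x + 1/x^2 := by
    field_simp; ring
  have h1x : 1/x ≤ 1 := by rw [div_le_one hxpos]; linarith
  have hbx : 3*b/x ≤ 3*b := by
    rw [div_le_iff₀ hxpos]; nlinarith
  have h1x2 : 1/x^2 ≤ 1 := by
    rw [div_le_one (by positivity)]; nlinarith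
  constructor
  · rw [hAk, hAk1, sub_nonneg, div_le_div_iff₀ (by positivity) (by positivity)]
    have hxc3 : x * c^3 ≤ x * (b + 1/x)^3 :=
      mul_le_mul_of_nonneg_left hc3 hxpos.le
    nlinarith [mul_nonneg (by linarith : (0:ℝ) ≤ b - 7) (sq_nonneg b),
      mul_nonneg (by linarith : (0:ℝ) ≤ b - 7) (by linarith : (0:ℝ) ≤ b)]
  · have hup : A (k+1) ≤ (x+1) / b^3 := by
      rw [hAk1]
      apply div_le_div_of_nonneg_left (by linarith) (by positivity)
      exact pow_le_pow_left₀ hbpos.le hbc 3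
    have : (x+1)/b^3 - x/b^3 = 1/b^3 := by ring
    rw [hAk]; linarith

private lemma D_bounds : ∀ᶠ k : ℕ in atTop,
    0 ≤ u (k+1) - u k ∧ u (k+1) - u k ≤ A (k+1) - A k := by
  filter_upwards [delta_bounds, tendsto_A.eventually_ge_atTop 1,
    (tendsto_add_atTop_nat 1).eventually (tendsto_A.eventually_ge_atTop 1)]
    with k hΔ hA1 hA1'
  obtain ⟨hΔ0, _⟩ := hΔ
  have hAk : (0:ℝ) < A k := by linarith
  have hAk' : (0:ℝ) < A (k+1) := by linarith
  constructor
  · have := Real.log_le_log hAk (by linarith : A k ≤ A (k+1))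
    simpa [u, sub_nonneg] using this
  · have h1 : Real.log (A (k+1) / A k) ≤ A (k+1) / A k - 1 :=
      Real.log_le_sub_one_of_pos (by positivity)
    have h2 : Real.log (A (k+1) / A k) = u (k+1) - u k := by
      rw [Real.log_div hAk'.ne' hAk.ne']; rfl
    have h3 : A (k+1) / A k - 1 = (A (k+1) - A k) / A k := by
      field_simp
    have h4 : (A (k+1) - A k) / A k ≤ A (k+1) - A k := div_le_self hΔ0 hA1
    rw [h2, h3] at h1; linarith

private lemma u_succ_le : ∀ᶠ k : ℕ in atTop, u (k+1) ≤ 2 * Real.log (k : ℝ) := by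
  filter_upwards [tendsto_log_nat.eventually_ge_atTop 7, eventually_ge_atTop 2]
    with k hb7 hk2
  have hx2 : (2:ℝ) ≤ (k:ℝ) := by exact_mod_cast hk2
  have hxpos : (0:ℝ) < (k:ℝ) := by linarith
  have hcast : ((k+1:ℕ):ℝ) = (k:ℝ) + 1 := by push_cast; ring
  have hbc : Real.log (k:ℝ) ≤ Real.log ((k:ℝ)+1) := Real.log_le_log hxpos (by linarith)
  have hc1 : (1:ℝ) ≤ Real.log ((k:ℝ)+1) := by linarith
  have hAk1 : A (k+1) = ((k:ℝ)+1) / (Real.log ((k:ℝ)+1)) ^ 3 := by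
    simp only [A]; rw [hcast]
  have h1 : A (k+1) ≤ (k:ℝ) + 1 := by
    rw [hAk1]
    apply div_le_self (by linarith)
    exact one_le_pow₀ hc1
  have hA1pos : (0:ℝ) < A (k+1) := by
    rw [hAk1]
    exact div_pos (by linarith) (pow_pos (by linarith) 3)
  have h2 : A (k+1) ≤ (k:ℝ)^2 := by nlinarith
  have h3 : u (k+1) ≤ Real.log ((k:ℝ)^2) := Real.log_le_log hA1pos h2
  rw [Real.log_pow] at h3
  push_cast at h3
  linarith

private lemma bound_tendsto (C : ℝ) {p : ℕ} (hp : p ≠ 0) :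
    Tendsto (fun k : ℕ => C / (Real.log (k:ℝ)) ^ p) atTop (𝓝 0) :=
  Tendsto.div_atTop tendsto_const_nhds ((tendsto_pow_atTop hp).comp tendsto_log_nat)

private lemma rpow_key₁ {α δ P v : ℝ} (hP : 0 < P) (hv : 0 < v) :
    P ^ (1/α) * v ^ (δ - 1/α) / (P / v) ^ (1/α) = v ^ δ := by
  have h1 : (P / v) ^ (1/α) = P ^ (1/α) / v ^ (1/α) := Real.div_rpow hP.le hv.le _
  have h4 : v ^ δ = v ^ (δ - 1/α) * v ^ (1/α) := by
    rw [← Real.rpow_add hv]; ring_nf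
  have n1 : P ^ (1/α) ≠ 0 := (Real.rpow_pos_of_pos hP _).ne'
  have n2 : v ^ (1/α) ≠ 0 := (Real.rpow_pos_of_pos hv _).ne'
  rw [h1, h4]
  field_simp

private lemma rpow_key₂ {α δ P Q v w : ℝ} (hP : 0 < P) (hQ : 0 < Q) (hv : 0 < v)
    (hw : 0 < w) :
    Q ^ (1/α) * w ^ (δ - 1/α) / (P / v) ^ (1/α)
      = (Q / P) ^ (1/α) * ((w / v) ^ (δ - 1/α) * v ^ δ) := by
  have h1 : (P / v) ^ (1/α) = P ^ (1/α) / v ^ (1/α) := Real.div_rpow hP.le hv.le _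
  have h2 : (Q / P) ^ (1/α) = Q ^ (1/α) / P ^ (1/α) := Real.div_rpow hQ.le hP.le _
  have h3 : (w / v) ^ (δ - 1/α) = w ^ (δ - 1/α) / v ^ (δ - 1/α) :=
    Real.div_rpow hw.le hv.le _
  have h4 : v ^ δ = v ^ (δ - 1/α) * v ^ (1/α) := by
    rw [← Real.rpow_add hv]; ring_nf
  have n1 : P ^ (1/α) ≠ 0 := (Real.rpow_pos_of_pos hP _).ne'
  have n2 : v ^ (1/α) ≠ 0 := (Real.rpow_pos_of_pos hv _).ne'
  have n3 : v ^ (δ - 1/α) ≠ 0 := (Real.rpow_pos_of_pos hv _).ne'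
  rw [h1, h2, h3, h4]
  field_simp

set_option maxHeartbeats 2000000 in
/-- Lemma 2(ii) of the paper, for `T_k = exp(k (log k)^{-3})` and `α ∈ (1,2)`,
`δ ∈ [0,1]`:
(a) `(T_{k+1}^{1/α}(log log T_{k+1})^{δ-1/α} - T_k^{1/α}(log log T_k)^{δ-1/α})
      / (T_{k+1}/log log T_{k+1})^{1/α} → 0`;
(b) `(1 - T_k/T_{k+1})^{1/2} T_k^{1/α} (log log T_k)^{δ-1/α}
      / (T_{k+1}/log log T_{k+1})^{1/α} → 0`;
(c) `T_k/T_{k+1} → 1`. -/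
theorem technical_sequence_limits
    (α : ℝ) (hα : α ∈ Ioo (1:ℝ) 2) (δ : ℝ) (hδ : δ ∈ Icc (0:ℝ) 1)
    (T : ℕ → ℝ) (hT : ∀ k : ℕ, T k = Real.exp ((k : ℝ) / (Real.log (k : ℝ)) ^ 3)) :
    Tendsto (fun k : ℕ =>
        (T (k+1) ^ (1/α) * (Real.log (Real.log (T (k+1)))) ^ (δ - 1/α) -
          T k ^ (1/α) * (Real.log (Real.log (T k))) ^ (δ - 1/α)) /
          (T (k+1) / Real.log (Real.log (T (k+1)))) ^ (1/α)) atTop (𝓝 0) ∧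
      Tendsto (fun k : ℕ =>
        Real.sqrt (1 - T k / T (k+1)) * T k ^ (1/α) *
          (Real.log (Real.log (T k))) ^ (δ - 1/α) /
          (T (k+1) / Real.log (Real.log (T (k+1)))) ^ (1/α)) atTop (𝓝 0) ∧
      Tendsto (fun k : ℕ => T k / T (k+1)) atTop (𝓝 1) := by
  obtain ⟨hα1, hα2⟩ := hα
  obtain ⟨hδ0, hδ1⟩ := hδ
  have hαpos : (0:ℝ) < α := by linarith
  have hαi0 : 0 < 1/α := by positivity
  have hαi1 : 1/α ≤ 1 := by rw [div_le_one hαpos]; linarith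
  have he1 : δ - 1/α ≤ 1 := by linarith
  have he2 : (-1:ℝ) ≤ δ - 1/α := by linarith
  have hTA : ∀ k, T k = Real.exp (A k) := fun k => hT k
  have hTpos : ∀ k, 0 < T k := fun k => by rw [hTA]; exact Real.exp_pos _
  have hlog2 : ∀ n, Real.log (Real.log (T n)) = u n := fun n => by
    rw [hTA n, Real.log_exp]; rfl
  have hr : ∀ k, T k / T (k+1) = Real.exp (-(A (k+1) - A k)) := fun k => by
    rw [hTA, hTA, ← Real.exp_sub, neg_sub]
  have hE1 := tendsto_log_nat.eventually_ge_atTop 7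
  have hu1 := tendsto_u.eventually_ge_atTop 1
  have hu1' := (tendsto_add_atTop_nat 1).eventually hu1
  refine ⟨?_, ?_, ?_⟩
  · -- part (a)
    apply squeeze_zero_norm' ?_ (bound_tendsto 4 (p := 2) (by norm_num))
    filter_upwards [hE1, delta_bounds, D_bounds, hu1, hu1', u_succ_le]
      with k hb7 hΔ hD hw1 hv1 hv2
    obtain ⟨hΔ0, hΔ1⟩ := hΔ
    obtain ⟨hD0, hD1⟩ := hD
    have hbpos : (0:ℝ) < Real.log (k:ℝ) := by linarith
    have hw : (0:ℝ) < u k := by linarith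
    have hv : (0:ℝ) < u (k+1) := by linarith
    have hP := hTpos (k+1)
    have hQ := hTpos k
    simp only [hlog2]
    rw [sub_div, rpow_key₁ hP hv, rpow_key₂ hP hQ hv hw, hr k]
    set b := Real.log (k:ℝ) with hbdef
    set t := A (k+1) - A k with htdef
    set s := u k / u (k+1) with hsdef
    set ρ := Real.exp (-t) ^ (1/α) with hρdef
    set σ := s ^ (δ - 1/α) with hσdef
    have hb3 : (0:ℝ) < 1/b^3 := by positivity
    have hs0 : 0 < s := by positivity
    have hs1 : s ≤ 1 := by rw [hsdef, div_le_one hv]; linarith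
    have hρ0 : 0 < ρ := Real.rpow_pos_of_pos (Real.exp_pos _) _
    have hρ1 : ρ ≤ 1 := Real.rpow_le_one (Real.exp_pos _).le
      (by rw [← Real.exp_zero]; exact Real.exp_le_exp.mpr (by linarith)) hαi0.le
    have hρlow : 1 - t ≤ ρ := by
      rw [hρdef, ← Real.exp_mul]
      have h1 := Real.add_one_le_exp (-t * (1/α))
      have htα : t * (1/α) ≤ t := mul_le_of_le_one_right hΔ0 hαi1
      nlinarith
    have hσ0 : 0 < σ := Real.rpow_pos_of_pos hs0 _
    have hσs : s ≤ σ := by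
      rw [hσdef]
      calc s = s ^ (1:ℝ) := (Real.rpow_one s).symm
        _ ≤ s ^ (δ - 1/α) := Real.rpow_le_rpow_of_exponent_ge hs0 hs1 he1
    have hσup : σ ≤ u (k+1) / u k := by
      rw [hσdef]
      calc s ^ (δ - 1/α) ≤ s ^ (-1:ℝ) :=
            Real.rpow_le_rpow_of_exponent_ge hs0 hs1 he2
        _ = u (k+1) / u k := by rw [Real.rpow_neg_one, hsdef, inv_div]
    have h1s : 1 - s ≤ t := by
      have heq : 1 - s = (u (k+1) - u k) / u (k+1) := by
        rw [hsdef]; field_simp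
      have hle : (u (k+1) - u k) / u (k+1) ≤ u (k+1) - u k :=
        div_le_self hD0 hv1
      rw [heq]; linarith
    have hvw : u (k+1) / u k ≤ 1 + t := by
      rw [div_le_iff₀ hw]
      nlinarith [mul_nonneg hΔ0 (by linarith : (0:ℝ) ≤ u k - 1)]
    have hzup : 1 - ρ * σ ≤ 2 * t := by
      nlinarith [mul_nonneg (by linarith : (0:ℝ) ≤ 1 - ρ)
        (by linarith : (0:ℝ) ≤ 1 - s),
        mul_le_mul_of_nonneg_left hσs hρ0.le]
    have hzlow : -t ≤ 1 - ρ * σ := by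
      have h1 : ρ * σ ≤ 1 * (u (k+1) / u k) :=
        mul_le_mul hρ1 hσup hσ0.le (by norm_num)
      rw [one_mul] at h1
      linarith
    have hvδ0 : (0:ℝ) ≤ u (k+1) ^ δ := Real.rpow_nonneg hv.le δ
    have hvδle : u (k+1) ^ δ ≤ 2 * b := by
      calc u (k+1) ^ δ ≤ u (k+1) ^ (1:ℝ) :=
            Real.rpow_le_rpow_of_exponent_le (by linarith) hδ1
        _ = u (k+1) := Real.rpow_one _
        _ ≤ 2 * b := hv2
    have hkey : u (k+1) ^ δ - ρ * (σ * u (k+1) ^ δ)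
        = u (k+1) ^ δ * (1 - ρ * σ) := by ring
    rw [hkey, Real.norm_eq_abs, abs_mul, abs_of_nonneg hvδ0]
    have habs : |1 - ρ * σ| ≤ 2 * (1/b^3) := by
      rw [abs_le]
      constructor <;> [linarith; linarith]
    calc u (k+1) ^ δ * |1 - ρ * σ| ≤ (2*b) * (2 * (1/b^3)) :=
          mul_le_mul hvδle habs (abs_nonneg _) (by linarith)
      _ = 4 * (b / b^3) := by ring
      _ = 4 * (1 / b^2) := by
          have hh : b / b^3 = 1 / b^2 := by
            rw [div_eq_div_iff (by positivity) (by positivity)]; ring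
          rw [hh]
      _ = 4 / b^2 := by ring
  · -- part (b)
    have h0 : Tendsto (fun k : ℕ => 1 / Real.log (k:ℝ)) atTop (𝓝 0) := by
      have := bound_tendsto 1 (p := 1) one_ne_zero
      simpa using this
    have h1 : Tendsto (fun k : ℕ => Real.sqrt (1 / Real.log (k:ℝ))) atTop (𝓝 0) := by
      have h := (Real.continuous_sqrt.tendsto 0).comp h0
      rw [Real.sqrt_zero] at h
      exact h
    have hg : Tendsto (fun k : ℕ => 4 * Real.sqrt (1 / Real.log (k:ℝ))) atTop (𝓝 0) := by
      have := h1.const_mul (4:ℝ)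
      simpa using this
    apply squeeze_zero_norm' ?_ hg
    filter_upwards [hE1, delta_bounds, D_bounds, hu1, hu1', u_succ_le]
      with k hb7 hΔ hD hw1 hv1 hv2
    obtain ⟨hΔ0, hΔ1⟩ := hΔ
    obtain ⟨hD0, hD1⟩ := hD
    have hbpos : (0:ℝ) < Real.log (k:ℝ) := by linarith
    have hw : (0:ℝ) < u k := by linarith
    have hv : (0:ℝ) < u (k+1) := by linarith
    have hP := hTpos (k+1)
    have hQ := hTpos k
    simp only [hlog2]
    rw [mul_assoc, mul_div_assoc, rpow_key₂ hP hQ hv hw, hr k]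
    set b := Real.log (k:ℝ) with hbdef
    set t := A (k+1) - A k with htdef
    set s := u k / u (k+1) with hsdef
    set ρ := Real.exp (-t) ^ (1/α) with hρdef
    set σ := s ^ (δ - 1/α) with hσdef
    have hb3 : (0:ℝ) < 1/b^3 := by positivity
    have hb31 : 1/b^3 ≤ 1 := by
      rw [div_le_one (by positivity)]
      nlinarith [pow_le_pow_left₀ (by norm_num : (0:ℝ) ≤ 7) hb7 3]
    have hs0 : 0 < s := by positivity
    have hs1 : s ≤ 1 := by rw [hsdef, div_le_one hv]; linarith
    have hρ0 : 0 < ρ := Real.rpow_pos_of_pos (Real.exp_pos _) _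
    have hρ1 : ρ ≤ 1 := Real.rpow_le_one (Real.exp_pos _).le
      (by rw [← Real.exp_zero]; exact Real.exp_le_exp.mpr (by linarith)) hαi0.le
    have hσ0 : 0 < σ := Real.rpow_pos_of_pos hs0 _
    have hσup : σ ≤ u (k+1) / u k := by
      rw [hσdef]
      calc s ^ (δ - 1/α) ≤ s ^ (-1:ℝ) :=
            Real.rpow_le_rpow_of_exponent_ge hs0 hs1 he2
        _ = u (k+1) / u k := by rw [Real.rpow_neg_one, hsdef, inv_div]
    have hσ2 : σ ≤ 2 := by
      have hd : u (k+1) / u k ≤ 2 := by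
        rw [div_le_iff₀ hw]; nlinarith
      linarith
    have hvδ0 : (0:ℝ) ≤ u (k+1) ^ δ := Real.rpow_nonneg hv.le δ
    have hvδle : u (k+1) ^ δ ≤ 2 * b := by
      calc u (k+1) ^ δ ≤ u (k+1) ^ (1:ℝ) :=
            Real.rpow_le_rpow_of_exponent_le (by linarith) hδ1
        _ = u (k+1) := Real.rpow_one _
        _ ≤ 2 * b := hv2
    have hsq1 : Real.sqrt (1 - Real.exp (-t)) ≤ Real.sqrt (1/b^3) := by
      apply Real.sqrt_le_sqrt
      have := Real.add_one_le_exp (-t)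
      linarith
    have hnn : (0:ℝ) ≤ Real.sqrt (1 - Real.exp (-t)) * (ρ * (σ * u (k+1) ^ δ)) :=
      mul_nonneg (Real.sqrt_nonneg _)
        (mul_nonneg hρ0.le (mul_nonneg hσ0.le hvδ0))
    rw [Real.norm_eq_abs, abs_of_nonneg hnn]
    have hstep : Real.sqrt (1 - Real.exp (-t)) * (ρ * (σ * u (k+1) ^ δ))
        ≤ Real.sqrt (1/b^3) * (1 * (2 * (2 * b))) := by
      gcongr
    have hsqeq : Real.sqrt (1/b) = Real.sqrt (1/b^3) * b := by
      have hbb : 1/b = 1/b^3 * b^2 := by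
        rw [one_div_mul_eq_div, div_eq_div_iff (by positivity) (by positivity)]; ring
      rw [hbb, Real.sqrt_mul (by positivity) (b^2), Real.sqrt_sq hbpos.le]
    calc Real.sqrt (1 - Real.exp (-t)) * (ρ * (σ * u (k+1) ^ δ))
        ≤ Real.sqrt (1/b^3) * (1 * (2 * (2 * b))) := hstep
      _ = 4 * Real.sqrt (1/b) := by rw [hsqeq]; ring
  · -- part (c)
    rw [← tendsto_sub_nhds_zero_iff]
    apply squeeze_zero_norm' ?_ (bound_tendsto 1 (p := 3) (by norm_num))
    filter_upwards [hE1, delta_bounds] with k hb7 hΔ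
    obtain ⟨hΔ0, hΔ1⟩ := hΔ
    have hbpos : (0:ℝ) < Real.log (k:ℝ) := by linarith
    have hb3 : (0:ℝ) < 1 / (Real.log (k:ℝ))^3 := by positivity
    rw [hr k]
    set t := A (k+1) - A k with htdef
    have h1 : Real.exp (-t) ≤ 1 := by
      rw [← Real.exp_zero]; exact Real.exp_le_exp.mpr (by linarith)
    have h2 : 1 - t ≤ Real.exp (-t) := by
      have := Real.add_one_le_exp (-t); linarith
    rw [Real.norm_eq_abs, abs_le]
    constructor <;> linarith
end
end

section
/- Let α ∈ (1,2), r > 0, and let b : [0,1] → ℝ be measurable with |b(t)| < 1 for almost every t ∈ [0,1]. Define Ψ(u) = (1+u)·log(1+u) − u for u > −1. Then ∫₀¹ ∫_{−r}^{r} Ψ( b(t)·x/r ) · |x|^{−1−α} dx dt = (2/r^α) · Σ_{k=1}^∞ [ ∫₀¹ b(t)^{2k} dt ] / ( 2k·(2k−1)·(2k−α) ); in particular, when |b(t)| ≤ 1 a.e. this double integral is at most (2/r^α)·Σ_{k=1}^∞ 1/(2k(2k−1)(2k−α)). -/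
open MeasureTheory Filter Set Topology

noncomputable section


lemma neg_one_pow_sq (n : ℕ) : ((-1:ℝ) ^ n) * ((-1:ℝ) ^ n) = 1 := by
  rcases Nat.even_or_odd n with h | h <;> simp [h.neg_one_pow]

lemma log_series_pm {x : ℝ} (hx : |x| < 1) :
    HasSum (fun n : ℕ => (-1:ℝ) ^ n * x ^ (n + 1) / (n + 1)) (Real.log (1 + x)) := by
  have h := (Real.hasSum_pow_div_log_of_abs_lt_one (x := -x) (by rwa [abs_neg])).mul_left (-1)
  simp only [neg_mul, one_mul] at h
  have : (1 : ℝ) - -x = 1 + x := by ring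
  rw [this, neg_neg] at h
  refine h.congr_fun (fun n => ?_)
  rw [neg_pow, pow_succ]
  ring

lemma psi_sym_hasSum {x : ℝ} (hx : |x| < 1) :
    HasSum (fun k : ℕ => 2 * x ^ (2 * (k + 1)) /
        ((2 * ((k:ℝ) + 1)) * (2 * ((k:ℝ) + 1) - 1)))
      ((1 + x) * Real.log (1 + x) + (1 - x) * Real.log (1 - x)) := by
  have hx' : |(-x)| < 1 := by rwa [abs_neg]
  have hA := log_series_pm hx
  have hB := log_series_pm hx'
  have hB' : HasSum (fun n : ℕ => -(x ^ (n + 1) / (n + 1))) (Real.log (1 - x)) := by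
    have h1 : (1 : ℝ) + -x = 1 - x := by ring
    rw [h1] at hB
    refine hB.congr_fun (fun n => ?_)
    have key : (-1:ℝ) ^ n * (-x) ^ (n + 1) = -(x ^ (n+1)) := by
      rcases Nat.even_or_odd n with h | h
      · rw [h.neg_one_pow, (h.add_one).neg_pow]; ring
      · rw [h.neg_one_pow, (h.add_one).neg_pow]; ring
    rw [show (-1:ℝ) ^ n * (-x) ^ (n + 1) / (n+1) = ((-1:ℝ) ^ n * (-x) ^ (n + 1)) / (n+1) from rfl, key, neg_div]
  have S1 : HasSum (fun n : ℕ => ((-1:ℝ) ^ n - 1) * x ^ (n + 1) / (n + 1))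
      (Real.log (1 + x) + Real.log (1 - x)) := by
    refine (hA.add hB').congr_fun (fun n => ?_)
    ring
  have S2 : HasSum (fun n : ℕ => ((-1:ℝ) ^ n + 1) * x ^ (n + 2) / (n + 1))
      (x * Real.log (1 + x) - x * Real.log (1 - x)) := by
    refine ((hA.mul_left x).sub (hB'.mul_left x)).congr_fun (fun n => ?_)
    rw [pow_succ]
    ring
  have hinj1 : Function.Injective (fun j : ℕ => 2 * j + 1) := fun a b h => by
    simp only at h; omega
  have hinj2 : Function.Injective (fun j : ℕ => 2 * j) := fun a b h => by
    simp only at h; omega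
  have S1' : HasSum (fun j : ℕ => (-2 : ℝ) * x ^ (2 * (j + 1)) / (2 * ((j:ℝ) + 1)))
      (Real.log (1 + x) + Real.log (1 - x)) := by
    have hz : ∀ n ∉ Set.range (fun j : ℕ => 2 * j + 1),
        ((-1:ℝ) ^ n - 1) * x ^ (n + 1) / (n + 1) = 0 := by
      intro n hn
      have hne : Even n := by
        rcases Nat.even_or_odd n with h | h
        · exact h
        · rcases h with ⟨j, hj⟩
          exact absurd ⟨j, by simp only []; omega⟩ hn
      rw [hne.neg_one_pow]
      simp
    have h := (hinj1.hasSum_iff hz).2 S1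
    refine h.congr_fun (fun j => ?_)
    simp only [Function.comp]
    have h1 : (-1:ℝ) ^ (2 * j + 1) = -1 := by
      rw [pow_succ, (even_two_mul j).neg_one_pow]; ring
    rw [h1]
    push_cast
    ring_nf
  have S2' : HasSum (fun j : ℕ => (2 : ℝ) * x ^ (2 * (j + 1)) / (2 * ((j:ℝ) + 1) - 1))
      (x * Real.log (1 + x) - x * Real.log (1 - x)) := by
    have hz : ∀ n ∉ Set.range (fun j : ℕ => 2 * j),
        ((-1:ℝ) ^ n + 1) * x ^ (n + 2) / (n + 1) = 0 := by
      intro n hn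
      have hno : Odd n := by
        rcases Nat.even_or_odd n with h | h
        · rcases h with ⟨j, hj⟩
          exact absurd ⟨j, by simp only []; omega⟩ hn
        · exact h
      rw [hno.neg_one_pow]
      simp
    have h := (hinj2.hasSum_iff hz).2 S2
    refine h.congr_fun (fun j => ?_)
    simp only [Function.comp]
    have h1 : (-1:ℝ) ^ (2 * j) = 1 := (even_two_mul j).neg_one_pow
    rw [h1]
    have h2 : 2 * j + 2 = 2 * (j + 1) := by omega
    rw [h2]
    push_cast
    ring_nf
  have T := S1'.add S2'
  have hsum : Real.log (1 + x) + Real.log (1 - x) +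
      (x * Real.log (1 + x) - x * Real.log (1 - x)) =
      (1 + x) * Real.log (1 + x) + (1 - x) * Real.log (1 - x) := by ring
  rw [hsum] at T
  refine T.congr_fun (fun j => ?_)
  have h1 : (2 * ((j:ℝ) + 1)) ≠ 0 := by positivity
  have h2 : (2 * ((j:ℝ) + 1) - 1) ≠ 0 :=
    ne_of_gt (by have hj : (0:ℝ) ≤ j := Nat.cast_nonneg j; linarith)
  field_simp
  ring

lemma psi_hasSum {u : ℝ} (hu : |u| < 1) :
    HasSum (fun n : ℕ => (-1:ℝ) ^ n * u ^ (n + 2) / ((n + 1) * (n + 2)))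
      ((1 + u) * Real.log (1 + u) - u) := by
  have hA := log_series_pm hu
  have hA1 : HasSum (fun n : ℕ => (-1:ℝ) ^ (n+1) * u ^ (n + 2) / (n + 2))
      (Real.log (1 + u) - u) := by
    have h2 : HasSum (fun n : ℕ => (-1:ℝ) ^ ((n+1)) * u ^ ((n+1) + 1) / (((n+1 : ℕ):ℝ) + 1))
        (Real.log (1 + u) - ∑ i ∈ Finset.range 1, (-1:ℝ) ^ i * u ^ (i + 1) / (i + 1)) := by
      rw [hasSum_nat_add_iff (f := fun n : ℕ => (-1:ℝ) ^ n * u ^ (n + 1) / (n + 1)) 1]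
      rw [sub_add_cancel]
      exact hA
    have h3 : HasSum (fun n : ℕ => (-1:ℝ) ^ (n+1) * u ^ (n + 2) / ((n:ℝ) + 2))
        (Real.log (1 + u) - ∑ i ∈ Finset.range 1, (-1:ℝ) ^ i * u ^ (i + 1) / (i + 1)) :=
      h2.congr_fun (fun n => by push_cast; ring_nf)
    simpa using h3
  have hB := hA.mul_left u
  have T := hB.add hA1
  have hsum : u * Real.log (1 + u) + (Real.log (1 + u) - u)
      = (1 + u) * Real.log (1 + u) - u := by ring
  rw [hsum] at T
  refine T.congr_fun (fun n => ?_)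
  have h1 : ((n:ℝ) + 1) ≠ 0 := by positivity
  have h2 : ((n:ℝ) + 2) ≠ 0 := by positivity
  push_cast
  field_simp
  ring

lemma psi_abs_le {u a : ℝ} (ha0 : 0 ≤ a) (ha : a < 1) (hu : |u| ≤ a) :
    |(1 + u) * Real.log (1 + u) - u| ≤ u ^ 2 / (2 * (1 - a)) := by
  have hu1 : |u| < 1 := lt_of_le_of_lt hu ha
  have hf := psi_hasSum hu1
  have hg : HasSum (fun n : ℕ => u ^ 2 / 2 * a ^ n) (u ^ 2 / 2 * (1 - a)⁻¹) :=
    (hasSum_geometric_of_lt_one ha0 ha).mul_left _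
  have hfa : ∀ n : ℕ, |(-1:ℝ) ^ n * u ^ (n + 2) / ((n + 1) * (n + 2))| ≤ u ^ 2 / 2 * a ^ n := by
    intro n
    have h1 : |(-1:ℝ) ^ n * u ^ (n + 2) / ((n + 1) * (n + 2))|
        = |u| ^ (n + 2) / ((n + 1) * (n + 2)) := by
      rw [abs_div, abs_mul, abs_pow, abs_pow, abs_neg, abs_one, one_pow, one_mul]
      congr 1
      rw [abs_of_pos]
      positivity
    rw [h1]
    have h2 : ((2:ℝ)) ≤ ((n:ℝ) + 1) * ((n:ℝ) + 2) := by nlinarith [Nat.cast_nonneg (α := ℝ) n]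
    have h3 : |u| ^ (n + 2) ≤ u ^ 2 * a ^ n := by
      have h4 : |u| ^ (n + 2) = |u| ^ 2 * |u| ^ n := by rw [← pow_add]; ring_nf
      rw [h4, sq_abs]
      have h5 : |u| ^ n ≤ a ^ n := pow_le_pow_left₀ (abs_nonneg u) hu n
      nlinarith [sq_nonneg u, pow_nonneg (abs_nonneg u) n]
    calc |u| ^ (n + 2) / (((n:ℝ) + 1) * ((n:ℝ) + 2)) ≤ |u| ^ (n + 2) / 2 := by
          apply div_le_div_of_nonneg_left _ (by norm_num) h2
          positivity
      _ ≤ u ^ 2 * a ^ n / 2 := by gcongr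
      _ = u ^ 2 / 2 * a ^ n := by ring
  have hsf : Summable (fun n : ℕ => ‖(-1:ℝ) ^ n * u ^ (n + 2) / ((n + 1) * (n + 2))‖) :=
    Summable.of_nonneg_of_le (fun n => norm_nonneg _) hfa hg.summable
  calc |(1 + u) * Real.log (1 + u) - u|
      = ‖∑' n : ℕ, (-1:ℝ) ^ n * u ^ (n + 2) / ((n + 1) * (n + 2))‖ := by
        rw [hf.tsum_eq]; rfl
    _ ≤ ∑' n : ℕ, ‖(-1:ℝ) ^ n * u ^ (n + 2) / ((n + 1) * (n + 2))‖ :=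
        norm_tsum_le_tsum_norm hsf
    _ ≤ ∑' n : ℕ, u ^ 2 / 2 * a ^ n := Summable.tsum_le_tsum hfa hsf hg.summable
    _ = u ^ 2 / 2 * (1 - a)⁻¹ := hg.tsum_eq
    _ = u ^ 2 / (2 * (1 - a)) := by
        rw [← div_eq_mul_inv, div_div]

-- integrability of the one-sided integrand
lemma integrableOn_aux {α r : ℝ} (hα : α ∈ Ioo (1:ℝ) 2) (hr : 0 < r)
    {Ψ : ℝ → ℝ} (hΨ : ∀ u : ℝ, -1 < u → Ψ u = (1 + u) * Real.log (1 + u) - u)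
    (c : ℝ) (hc : |c| < 1) :
    IntegrableOn (fun x => Ψ (c * x / r) * |x| ^ (-1 - α)) (Ioc 0 r) volume := by
  have h1α : 1 < α := hα.1
  have hc0 : 0 ≤ |c| := abs_nonneg c
  -- facts about points of Ioc 0 r
  have hmem : ∀ x ∈ Ioc (0:ℝ) r, |c * x / r| ≤ |c| := by
    intro x hx
    rw [abs_div, abs_mul, abs_of_pos hr, abs_of_pos hx.1]
    rw [div_le_iff₀ hr]
    calc |c| * x ≤ |c| * r := by gcongr; exact hx.2
      _ = |c| * r := rfl
  have hgt : ∀ x ∈ Ioc (0:ℝ) r, -1 < c * x / r := by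
    intro x hx
    have := hmem x hx
    have h2 := neg_abs_le (c * x / r)
    nlinarith
  -- the continuous model function
  set G : ℝ → ℝ := fun x =>
    ((1 + c * x / r) * Real.log (1 + c * x / r) - c * x / r) * x ^ (-1 - α) with hG
  have hcongr : EqOn (fun x => Ψ (c * x / r) * |x| ^ (-1 - α)) G (Ioc 0 r) := by
    intro x hx
    simp only [G]
    rw [hΨ _ (hgt x hx), abs_of_pos hx.1]
  rw [integrableOn_congr_fun hcongr measurableSet_Ioc]
  -- measurability via continuity
  have hcont : ContinuousOn G (Ioc 0 r) := by
    apply ContinuousOn.mul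
    · apply ContinuousOn.sub
      · apply ContinuousOn.mul
        · exact (continuous_const.add ((continuous_const.mul continuous_id').div_const r)).continuousOn
        · apply Real.continuousOn_log.comp
            ((continuous_const.add ((continuous_const.mul continuous_id').div_const r)).continuousOn)
          intro x hx
          simp only [mem_compl_iff, mem_singleton_iff]
          intro h
          change 1 + c * x / r = 0 at h
          linarith [hgt x hx]
      · exact ((continuous_const.mul continuous_id').div_const r).continuousOn
    · apply ContinuousOn.rpow_const continuousOn_id
      intro x hx
      exact Or.inl (ne_of_gt hx.1)
  -- majorant
  set C : ℝ := c ^ 2 / (2 * (1 - |c|) * r ^ 2) with hC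
  have hmaj : Integrable (fun x => C * x ^ ((1:ℝ) - α)) ((volume : Measure ℝ).restrict (Ioc 0 r)) := by
    have h := intervalIntegral.intervalIntegrable_rpow' (a := 0) (b := r)
      (r := 1 - α) (by linarith [hα.2])
    rw [intervalIntegrable_iff_integrableOn_Ioc_of_le hr.le] at h
    exact h.const_mul C
  apply Integrable.mono hmaj (hcont.aestronglyMeasurable measurableSet_Ioc)
  rw [ae_restrict_iff' measurableSet_Ioc]
  refine ae_of_all _ (fun x hx => ?_)
  have hx0 : 0 < x := hx.1
  have habs := hmem x hx
  have hpsi := psi_abs_le hc0 hc habs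
  have hrp : (0:ℝ) ≤ x ^ (-1 - α) := Real.rpow_nonneg hx0.le _
  rw [Real.norm_eq_abs, Real.norm_eq_abs, abs_mul]
  have h2 : |x ^ (-1-α)| = x ^ (-1-α) := abs_of_nonneg hrp
  rw [h2]
  have key : (c * x / r) ^ 2 / (2 * (1 - |c|)) * x ^ (-1 - α) = C * x ^ ((1:ℝ) - α) := by
    have hx2 : (x:ℝ) ^ 2 * x ^ (-1-α) = x ^ ((1:ℝ) - α) := by
      rw [← Real.rpow_natCast x 2, ← Real.rpow_add hx0]
      congr 1
      push_cast; ring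
    calc (c * x / r) ^ 2 / (2 * (1 - |c|)) * x ^ (-1 - α)
        = c ^ 2 / (2 * (1 - |c|) * r ^ 2) * (x ^ 2 * x ^ (-1-α)) := by
          rw [div_pow, mul_pow]
          have hr0 : r ≠ 0 := ne_of_gt hr
          have hc1 : (1:ℝ) - |c| ≠ 0 := ne_of_gt (by linarith)
          field_simp
      _ = C * x ^ ((1:ℝ) - α) := by rw [hx2]
  have hstep : |(1 + c * x / r) * Real.log (1 + c * x / r) - c * x / r| * x ^ (-1-α)
      ≤ (c * x / r) ^ 2 / (2 * (1 - |c|)) * x ^ (-1 - α) := by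
    gcongr
  calc |(1 + c * x / r) * Real.log (1 + c * x / r) - c * x / r| * x ^ (-1-α)
      ≤ (c * x / r) ^ 2 / (2 * (1 - |c|)) * x ^ (-1 - α) := hstep
    _ = C * x ^ ((1:ℝ) - α) := key
    _ ≤ |C * x ^ ((1:ℝ) - α)| := le_abs_self _

lemma term_eqOn {α r : ℝ} (hr : 0 < r) (c : ℝ) (k : ℕ) :
    EqOn (fun x : ℝ => 2 * (c * x / r) ^ (2*(k+1)) /
        ((2*((k:ℝ)+1)) * (2*((k:ℝ)+1)-1)) * |x| ^ (-1-α))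
      (fun x : ℝ => (2 * c ^ (2*(k+1)) / ((2*((k:ℝ)+1)) * (2*((k:ℝ)+1)-1) * r ^ (2*(k+1))))
        * x ^ (((2*(k+1) : ℕ) : ℝ) - 1 - α)) (Ioc 0 r) := by
  intro x hx
  have hx0 : 0 < x := hx.1
  simp only []
  rw [abs_of_pos hx0]
  have hxp : x ^ (((2*(k+1) : ℕ) : ℝ) - 1 - α) = x ^ (2*(k+1)) * x ^ (-1 - α) := by
    rw [← Real.rpow_natCast x (2*(k+1)), ← Real.rpow_add hx0]
    congr 1
    ring
  rw [hxp, div_pow, mul_pow]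
  have hr0 : r ≠ 0 := ne_of_gt hr
  have hd : ((2*((k:ℝ)+1)) * (2*((k:ℝ)+1)-1)) ≠ 0 := by
    have h1 : (0:ℝ) ≤ (k:ℝ) := Nat.cast_nonneg k
    have : (0:ℝ) < (2*((k:ℝ)+1)) * (2*((k:ℝ)+1)-1) := by nlinarith
    exact ne_of_gt this
  field_simp

lemma term_integrableOn {α r : ℝ} (hα : α ∈ Ioo (1:ℝ) 2) (hr : 0 < r) (c : ℝ) (k : ℕ) :
    IntegrableOn (fun x : ℝ => 2 * (c * x / r) ^ (2*(k+1)) /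
        ((2*((k:ℝ)+1)) * (2*((k:ℝ)+1)-1)) * |x| ^ (-1-α)) (Ioc 0 r) volume := by
  rw [integrableOn_congr_fun (term_eqOn hr c k) measurableSet_Ioc]
  have hp : (-1:ℝ) < ((2*(k+1) : ℕ) : ℝ) - 1 - α := by
    have : ((2*(k+1) : ℕ) : ℝ) = 2*((k:ℝ)+1) := by push_cast; ring
    rw [this]
    have h1 : (0:ℝ) ≤ (k:ℝ) := Nat.cast_nonneg k
    linarith [hα.2]
  have h := intervalIntegral.intervalIntegrable_rpow' (a := 0) (b := r)
    (r := ((2*(k+1) : ℕ) : ℝ) - 1 - α) hp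
  rw [intervalIntegrable_iff_integrableOn_Ioc_of_le hr.le] at h
  exact h.const_mul _

lemma term_integral {α r : ℝ} (hα : α ∈ Ioo (1:ℝ) 2) (hr : 0 < r) (c : ℝ) (k : ℕ) :
    ∫ x in Ioc (0:ℝ) r, 2 * (c * x / r) ^ (2*(k+1)) /
        ((2*((k:ℝ)+1)) * (2*((k:ℝ)+1)-1)) * |x| ^ (-1-α)
      = (2 / r ^ α) * (c ^ (2*(k+1)) /
          (2*((k:ℝ)+1) * (2*((k:ℝ)+1)-1) * (2*((k:ℝ)+1)-α))) := by
  rw [setIntegral_congr_fun measurableSet_Ioc (term_eqOn hr c k)]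
  set p : ℝ := ((2*(k+1) : ℕ) : ℝ) - 1 - α with hpdef
  have hcast : ((2*(k+1) : ℕ) : ℝ) = 2*((k:ℝ)+1) := by push_cast; ring
  have h1 : (0:ℝ) ≤ (k:ℝ) := Nat.cast_nonneg k
  have hp : (-1:ℝ) < p := by rw [hpdef, hcast]; linarith [hα.2]
  have hp1 : p + 1 = 2*((k:ℝ)+1) - α := by rw [hpdef, hcast]; ring
  have hp1pos : 0 < p + 1 := by rw [hp1]; linarith [hα.2]
  rw [MeasureTheory.integral_const_mul, ← intervalIntegral.integral_of_le hr.le, integral_rpow (Or.inl hp)]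
  rw [Real.zero_rpow (ne_of_gt hp1pos), sub_zero]
  have hrP : r ^ (p + 1) = r ^ (2*(k+1)) * (r ^ α)⁻¹ := by
    have : p + 1 = ((2*(k+1) : ℕ) : ℝ) + (-α) := by rw [hpdef]; ring
    rw [this, Real.rpow_add hr, Real.rpow_natCast, Real.rpow_neg hr.le]
  rw [hrP, hp1]
  have hd : ((2*((k:ℝ)+1)) * (2*((k:ℝ)+1)-1)) ≠ 0 := by
    have : (0:ℝ) < (2*((k:ℝ)+1)) * (2*((k:ℝ)+1)-1) := by nlinarith
    exact ne_of_gt this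
  have hda : (2*((k:ℝ)+1)-α) ≠ 0 := by intro h; rw [← hp1] at h; linarith
  have hr0 : r ≠ 0 := ne_of_gt hr
  have hrn : (r:ℝ) ^ (2*(k+1)) ≠ 0 := pow_ne_zero _ hr0
  have hra : (r:ℝ) ^ α ≠ 0 := ne_of_gt (Real.rpow_pos_of_pos hr α)
  field_simp

lemma inner_integral {α r : ℝ} (hα : α ∈ Ioo (1:ℝ) 2) (hr : 0 < r)
    {Ψ : ℝ → ℝ} (hΨ : ∀ u : ℝ, -1 < u → Ψ u = (1 + u) * Real.log (1 + u) - u)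
    (c : ℝ) (hc : |c| < 1) :
    (∫ x in (-r)..r, Ψ (c * x / r) * |x| ^ (-1 - α)) =
      (2 / r ^ α) * ∑' k : ℕ, c ^ (2*(k+1)) /
        (2*((k:ℝ)+1) * (2*((k:ℝ)+1)-1) * (2*((k:ℝ)+1)-α)) := by
  set f : ℝ → ℝ := fun x => Ψ (c * x / r) * |x| ^ (-1 - α) with hf
  set f' : ℝ → ℝ := fun x => Ψ (-c * x / r) * |x| ^ (-1 - α) with hf'
  have hc' : |(-c)| < 1 := by rwa [abs_neg]
  have hIf : IntegrableOn f (Ioc 0 r) volume := integrableOn_aux hα hr hΨ c hc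
  have hIf' : IntegrableOn f' (Ioc 0 r) volume := integrableOn_aux hα hr hΨ (-c) hc'
  have hfi : IntervalIntegrable f volume 0 r :=
    (intervalIntegrable_iff_integrableOn_Ioc_of_le hr.le).2 hIf
  have hfi' : IntervalIntegrable f' volume 0 r :=
    (intervalIntegrable_iff_integrableOn_Ioc_of_le hr.le).2 hIf'
  have hneg : ∀ x, f (-x) = f' x := by
    intro x
    simp only [hf, hf']
    rw [abs_neg]
    congr 2
    ring
  have hneg' : ∀ x, f' (-x) = f x := by
    intro x
    simp only [hf, hf']
    rw [abs_neg]
    congr 2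
    ring
  have hfeq : f = fun x => f' (-x) := funext fun x => (hneg' x).symm
  have hleft : IntervalIntegrable f volume (-r) 0 := by
    rw [hfeq]
    have := (IntervalIntegrable.iff_comp_neg enorm_ne_top).mp hfi'
    rw [neg_zero] at this
    exact this.symm
  have hsplit : (∫ x in (-r)..r, f x) = (∫ x in (-r)..0, f x) + ∫ x in (0:ℝ)..r, f x :=
    (intervalIntegral.integral_add_adjacent_intervals hleft hfi).symm
  have hcomp : (∫ x in (-r)..0, f x) = ∫ x in (0:ℝ)..r, f' x := by
    have h := intervalIntegral.integral_comp_neg (a := (0:ℝ)) (b := r) f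
    rw [neg_zero] at h
    rw [← h]
    exact intervalIntegral.integral_congr (fun x _ => hneg x)
  have hadd : (∫ x in (0:ℝ)..r, f' x) + (∫ x in (0:ℝ)..r, f x)
      = ∫ x in (0:ℝ)..r, (f' x + f x) := (intervalIntegral.integral_add hfi' hfi).symm
  have hIoc : (∫ x in (0:ℝ)..r, (f' x + f x)) = ∫ x in Ioc (0:ℝ) r, (f' x + f x) := by
    rw [intervalIntegral.integral_of_le hr.le]
  -- the series of functions
  set F : ℕ → ℝ → ℝ := fun k x => 2 * (c * x / r) ^ (2*(k+1)) /
      ((2*((k:ℝ)+1)) * (2*((k:ℝ)+1)-1)) * |x| ^ (-1-α) with hF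
  have hd1pos : ∀ k : ℕ, (0:ℝ) < (2*((k:ℝ)+1)) * (2*((k:ℝ)+1)-1) := by
    intro k
    have h1 : (0:ℝ) ≤ (k:ℝ) := Nat.cast_nonneg k
    nlinarith
  have hFpos : ∀ k x, 0 ≤ F k x := by
    intro k x
    apply mul_nonneg _ (Real.rpow_nonneg (abs_nonneg x) _)
    apply div_nonneg _ (hd1pos k).le
    have : (0:ℝ) ≤ (c * x / r) ^ (2*(k+1)) := (even_two_mul (k+1)).pow_nonneg _
    linarith
  have hpt : ∀ x ∈ Ioc (0:ℝ) r, f' x + f x = ∑' k, F k x := by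
    intro x hx
    have hx0 : 0 < x := hx.1
    have hu : |c * x / r| < 1 := by
      have h1 : |c * x / r| ≤ |c| := by
        rw [abs_div, abs_mul, abs_of_pos hr, abs_of_pos hx0, div_le_iff₀ hr]
        calc |c| * x ≤ |c| * r := by gcongr; exact hx.2
          _ = |c| * r := rfl
      linarith
    have hgt1 : -1 < c * x / r := by
      have := neg_abs_le (c * x / r); linarith
    have hgt2 : -1 < -(c * x / r) := by
      have := le_abs_self (c * x / r); linarith
    have hs := (psi_sym_hasSum hu).mul_right (|x| ^ (-1-α))
    have heq : f' x + f x = ((1 + c * x / r) * Real.log (1 + c * x / r)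
        + (1 - c * x / r) * Real.log (1 - c * x / r)) * |x| ^ (-1-α) := by
      simp only [hf, hf']
      have hm : -c * x / r = -(c * x / r) := by ring
      rw [hΨ _ hgt1, hm, hΨ _ hgt2]
      have h1 : (1 : ℝ) + -(c * x / r) = 1 - c * x / r := by ring
      rw [h1]
      ring
    rw [heq, ← hs.tsum_eq]
  -- value of each term and summability
  have hFval : (fun k => ∫ x in Ioc (0:ℝ) r, ‖F k x‖) = fun k : ℕ => (2 / r ^ α) *
      (c ^ (2*(k+1)) / (2*((k:ℝ)+1) * (2*((k:ℝ)+1)-1) * (2*((k:ℝ)+1)-α))) := by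
    funext k
    have : (fun x => ‖F k x‖) = F k := funext fun x => by
      rw [Real.norm_eq_abs, abs_of_nonneg (hFpos k x)]
    rw [this]
    exact term_integral hα hr c k
  have hFsum : Summable (fun k => ∫ x in Ioc (0:ℝ) r, ‖F k x‖) := by
    rw [hFval]
    have hc2lt : c ^ 2 < 1 := by
      have hce : c ^ 2 = |c| ^ 2 := (sq_abs c).symm
      nlinarith [abs_nonneg c]
    apply Summable.of_nonneg_of_le
      (fun k => ?_)
      (fun k => ?_)
      (((summable_geometric_of_lt_one (by positivity) hc2lt).mul_left
        ((2 / r ^ α) * (c^2 / (2 * (2 - α))))))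
    · have := hFpos k
      apply mul_nonneg (by positivity)
      apply div_nonneg ((even_two_mul (k+1)).pow_nonneg c)
      have h1 : (0:ℝ) ≤ (k:ℝ) := Nat.cast_nonneg k
      have h2 : (0:ℝ) < 2*((k:ℝ)+1) - α := by nlinarith [hα.2]
      nlinarith [hd1pos k]
    · have h1 : (0:ℝ) ≤ (k:ℝ) := Nat.cast_nonneg k
      have h2 : (0:ℝ) < 2*((k:ℝ)+1) - α := by nlinarith [hα.2]
      have hA : (2:ℝ) ≤ 2*((k:ℝ)+1) := by linarith
      have hB : (1:ℝ) ≤ 2*((k:ℝ)+1)-1 := by linarith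
      have hC : (2:ℝ)-α ≤ 2*((k:ℝ)+1)-α := by linarith
      have hAB : (2:ℝ) ≤ 2*((k:ℝ)+1) * (2*((k:ℝ)+1)-1) := by nlinarith
      have h3 : (2:ℝ) * (2 - α) ≤ 2*((k:ℝ)+1) * (2*((k:ℝ)+1)-1) * (2*((k:ℝ)+1)-α) :=
        mul_le_mul hAB hC (by linarith [hα.2]) (by linarith)
      have hc2 : c ^ (2*(k+1)) = (c^2)^(k+1) := by rw [← pow_mul]
      have h4 : c ^ (2*(k+1)) / (2*((k:ℝ)+1) * (2*((k:ℝ)+1)-1) * (2*((k:ℝ)+1)-α))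
          ≤ (c^2)^(k+1) / (2 * (2 - α)) := by
        rw [hc2]
        have hb : (0:ℝ) < 2 * (2 - α) := by nlinarith [hα.2]
        exact div_le_div_of_nonneg_left (by positivity) hb h3
      have h5 : (2 / r ^ α) * (c ^ (2*(k+1)) / (2*((k:ℝ)+1) * (2*((k:ℝ)+1)-1) * (2*((k:ℝ)+1)-α)))
          ≤ (2 / r ^ α) * ((c^2)^(k+1) / (2 * (2 - α))) := by
        apply mul_le_mul_of_nonneg_left h4 (by positivity)
      calc (2 / r ^ α) * (c ^ (2*(k+1)) / (2*((k:ℝ)+1) * (2*((k:ℝ)+1)-1) * (2*((k:ℝ)+1)-α)))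
          ≤ (2 / r ^ α) * ((c^2)^(k+1) / (2 * (2 - α))) := h5
        _ = (2 / r ^ α) * (c^2 / (2 * (2 - α))) * (c^2)^k := by rw [pow_succ]; ring
  have hFint : ∀ k : ℕ, Integrable (F k) ((volume : Measure ℝ).restrict (Ioc 0 r)) :=
    fun k => term_integrableOn hα hr c k
  have hswap := MeasureTheory.integral_tsum_of_summable_integral_norm hFint hFsum
  calc (∫ x in (-r)..r, f x)
      = (∫ x in (0:ℝ)..r, f' x) + ∫ x in (0:ℝ)..r, f x := by rw [hsplit, hcomp]
    _ = ∫ x in Ioc (0:ℝ) r, (f' x + f x) := by rw [hadd, hIoc]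
    _ = ∫ x in Ioc (0:ℝ) r, ∑' k, F k x := setIntegral_congr_fun measurableSet_Ioc hpt
    _ = ∑' k, ∫ x in Ioc (0:ℝ) r, F k x := hswap.symm
    _ = ∑' k : ℕ, (2 / r ^ α) * (c ^ (2*(k+1)) /
          (2*((k:ℝ)+1) * (2*((k:ℝ)+1)-1) * (2*((k:ℝ)+1)-α))) := by
        congr 1
        funext k
        exact term_integral hα hr c k
    _ = (2 / r ^ α) * ∑' k : ℕ, c ^ (2*(k+1)) /
          (2*((k:ℝ)+1) * (2*((k:ℝ)+1)-1) * (2*((k:ℝ)+1)-α)) := tsum_mul_left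

/-- For `Ψ(u) = (1+u)log(1+u) - u`, `α ∈ (1,2)`, `r > 0` and measurable `b` with
`|b(t)| < 1` a.e. on `[0,1]`:
`∫₀¹∫_{-r}^{r} Ψ(b(t)x/r)|x|^{-1-α} dx dt
   = (2/r^α) Σ_k (∫₀¹ b(t)^{2k} dt)/(2k(2k-1)(2k-α))`,
and in particular the double integral is at most
`(2/r^α) Σ_k 1/(2k(2k-1)(2k-α))`. -/
theorem psi_double_integral_series
    (α : ℝ) (hα : α ∈ Ioo (1:ℝ) 2) (r : ℝ) (hr : 0 < r)
    (b : ℝ → ℝ) (hb : Measurable b)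
    (hb1 : ∀ᵐ t ∂(volume.restrict (Icc (0:ℝ) 1)), |b t| < 1)
    (Ψ : ℝ → ℝ) (hΨ : ∀ u : ℝ, -1 < u → Ψ u = (1 + u) * Real.log (1 + u) - u) :
    (∫ t in Icc (0:ℝ) 1, ∫ x in (-r)..r, Ψ (b t * x / r) * |x| ^ (-1 - α)) =
      (2 / r ^ α) * ∑' k : ℕ,
        (∫ t in Icc (0:ℝ) 1, b t ^ (2 * (k + 1))) /
          (2 * ((k:ℝ) + 1) * (2 * ((k:ℝ) + 1) - 1) * (2 * ((k:ℝ) + 1) - α)) ∧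
    (∫ t in Icc (0:ℝ) 1, ∫ x in (-r)..r, Ψ (b t * x / r) * |x| ^ (-1 - α)) ≤
      (2 / r ^ α) * ∑' k : ℕ,
        1 / (2 * ((k:ℝ) + 1) * (2 * ((k:ℝ) + 1) - 1) * (2 * ((k:ℝ) + 1) - α)) := by
  haveI : IsFiniteMeasure ((volume : Measure ℝ).restrict (Icc (0:ℝ) 1)) :=
    ⟨by rw [Measure.restrict_apply_univ]; exact measure_Icc_lt_top⟩
  set D : ℕ → ℝ := fun k => 2 * ((k:ℝ) + 1) * (2 * ((k:ℝ) + 1) - 1) * (2 * ((k:ℝ) + 1) - α)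
    with hD
  have hDpos : ∀ k : ℕ, 0 < D k := by
    intro k
    have h1 : (0:ℝ) ≤ (k:ℝ) := Nat.cast_nonneg k
    have h2 : (0:ℝ) < 2*((k:ℝ)+1) - α := by nlinarith [hα.2]
    have : (0:ℝ) < 2 * ((k:ℝ) + 1) * (2 * ((k:ℝ) + 1) - 1) := by nlinarith
    exact mul_pos this h2
  have hDge : ∀ k : ℕ, ((k:ℝ)+1)^2 * (2 - α) ≤ D k := by
    intro k
    have h1 : (0:ℝ) ≤ (k:ℝ) := Nat.cast_nonneg k
    have hA : ((k:ℝ)+1) ≤ 2*((k:ℝ)+1) := by linarith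
    have hB : ((k:ℝ)+1) ≤ 2*((k:ℝ)+1)-1 := by linarith
    have hC : (2:ℝ)-α ≤ 2*((k:ℝ)+1)-α := by linarith
    have hAB : ((k:ℝ)+1)^2 ≤ 2*((k:ℝ)+1) * (2*((k:ℝ)+1)-1) := by nlinarith
    exact mul_le_mul hAB hC (by linarith [hα.2]) (by nlinarith)
  have hBsum : Summable (fun k : ℕ => 1 / D k) := by
    have hs2 : Summable (fun n : ℕ => 1 / ((n:ℝ)) ^ 2) :=
      (Real.summable_one_div_nat_pow).2 one_lt_two
    have hs3 : Summable (fun k : ℕ => 1 / (((k:ℝ)+1)) ^ 2) := by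
      have := (summable_nat_add_iff (f := fun n : ℕ => 1 / ((n:ℝ)) ^ 2) 1).2 hs2
      refine this.congr (fun k => ?_)
      push_cast
      ring
    apply Summable.of_nonneg_of_le (fun k => (one_div_pos.2 (hDpos k)).le) (fun k => ?_)
      (hs3.mul_right (1 / (2-α)))
    have h2α : (0:ℝ) < 2 - α := by linarith [hα.2]
    calc 1 / D k ≤ 1 / (((k:ℝ)+1)^2 * (2-α)) :=
          one_div_le_one_div_of_le (by positivity) (hDge k)
      _ = 1 / (((k:ℝ)+1)^2) * (1 / (2-α)) := by
          rw [div_mul_div_comm, one_mul]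
  -- rewrite LHS using the inner integral formula
  have hae : (fun t => ∫ x in (-r)..r, Ψ (b t * x / r) * |x| ^ (-1 - α))
      =ᵐ[volume.restrict (Icc (0:ℝ) 1)]
      (fun t => (2 / r ^ α) * ∑' k : ℕ, (b t) ^ (2*(k+1)) / D k) :=
    hb1.mono fun t ht => inner_integral hα hr hΨ (b t) ht
  have hLHS1 : (∫ t in Icc (0:ℝ) 1, ∫ x in (-r)..r, Ψ (b t * x / r) * |x| ^ (-1 - α))
      = ∫ t in Icc (0:ℝ) 1, (2 / r ^ α) * ∑' k : ℕ, (b t) ^ (2*(k+1)) / D k :=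
    integral_congr_ae hae
  -- integrability of powers
  have hPint : ∀ k : ℕ, Integrable (fun t => b t ^ (2*(k+1)))
      ((volume : Measure ℝ).restrict (Icc (0:ℝ) 1)) := by
    intro k
    apply Integrable.mono' (integrable_const (1:ℝ))
      (hb.pow_const (2*(k+1))).aestronglyMeasurable
    refine hb1.mono fun t ht => ?_
    rw [Real.norm_eq_abs, abs_pow]
    exact pow_le_one₀ (abs_nonneg _) ht.le
  set G : ℕ → ℝ → ℝ := fun k t => (b t) ^ (2*(k+1)) / D k with hG
  have hGint : ∀ k : ℕ, Integrable (G k) ((volume : Measure ℝ).restrict (Icc (0:ℝ) 1)) :=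
    fun k => (hPint k).div_const (D k)
  have hbd : ∀ k : ℕ, ∀ᵐ t ∂(volume.restrict (Icc (0:ℝ) 1)), ‖G k t‖ ≤ 1 / D k := by
    intro k
    refine hb1.mono fun t ht => ?_
    simp only [hG, norm_div, Real.norm_eq_abs, abs_pow]
    rw [abs_of_pos (hDpos k)]
    exact (div_le_div_iff_of_pos_right (hDpos k)).2 (pow_le_one₀ (abs_nonneg _) ht.le)
  have hGnorm : ∀ k : ℕ, (∫ t in Icc (0:ℝ) 1, ‖G k t‖) ≤ 1 / D k := by
    intro k
    calc (∫ t in Icc (0:ℝ) 1, ‖G k t‖)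
        ≤ ∫ _t in Icc (0:ℝ) 1, (1 / D k) :=
          integral_mono_ae (hGint k).norm (integrable_const _) (hbd k)
      _ = 1 / D k := by
          rw [setIntegral_const, Real.volume_real_Icc, sub_zero, max_eq_left zero_le_one, one_smul]
  have hGsum : Summable (fun k : ℕ => ∫ t in Icc (0:ℝ) 1, ‖G k t‖) :=
    Summable.of_nonneg_of_le (fun k => integral_nonneg fun t => norm_nonneg _) hGnorm hBsum
  have hswap := MeasureTheory.integral_tsum_of_summable_integral_norm hGint hGsum
  have hIk : ∀ k : ℕ, (∫ t in Icc (0:ℝ) 1, G k t)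
      = (∫ t in Icc (0:ℝ) 1, b t ^ (2*(k+1))) / D k := fun k => integral_div _ _
  have hmain : (∫ t in Icc (0:ℝ) 1, ∫ x in (-r)..r, Ψ (b t * x / r) * |x| ^ (-1 - α)) =
      (2 / r ^ α) * ∑' k : ℕ, (∫ t in Icc (0:ℝ) 1, b t ^ (2 * (k + 1))) / D k := by
    rw [hLHS1, MeasureTheory.integral_const_mul]
    congr 1
    rw [← hswap]
    congr 1
    funext k
    exact hIk k
  have hrα : (0:ℝ) < r ^ α := Real.rpow_pos_of_pos hr α
  constructor
  · exact hmain
  · rw [hmain]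
    apply mul_le_mul_of_nonneg_left _ (by positivity)
    have hint1 : ∀ k : ℕ, (∫ t in Icc (0:ℝ) 1, b t ^ (2*(k+1))) ≤ 1 := by
      intro k
      have hb2 : ∀ᵐ t ∂(volume.restrict (Icc (0:ℝ) 1)), b t ^ (2*(k+1)) ≤ 1 := by
        refine hb1.mono fun t ht => ?_
        calc b t ^ (2*(k+1)) ≤ |b t ^ (2*(k+1))| := le_abs_self _
          _ = |b t| ^ (2*(k+1)) := abs_pow _ _
          _ ≤ 1 := pow_le_one₀ (abs_nonneg _) ht.le
      calc (∫ t in Icc (0:ℝ) 1, b t ^ (2*(k+1)))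
          ≤ ∫ _t in Icc (0:ℝ) 1, (1:ℝ) :=
            integral_mono_ae (hPint k) (integrable_const _) hb2
        _ = 1 := by
            rw [setIntegral_const, Real.volume_real_Icc, sub_zero, max_eq_left zero_le_one, one_smul]
    have hAnn : ∀ k : ℕ, 0 ≤ (∫ t in Icc (0:ℝ) 1, b t ^ (2*(k+1))) / D k := by
      intro k
      apply div_nonneg _ (hDpos k).le
      exact integral_nonneg fun t => (even_two_mul (k+1)).pow_nonneg _
    have hAB : ∀ k : ℕ, (∫ t in Icc (0:ℝ) 1, b t ^ (2*(k+1))) / D k ≤ 1 / D k :=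
      fun k => (div_le_div_iff_of_pos_right (hDpos k)).2 (hint1 k)
    exact Summable.tsum_le_tsum hAB (Summable.of_nonneg_of_le hAnn hAB hBsum) hBsum
end
end

section
/- Let α ∈ (1,2) and let g : [0,1] → ℝ be a bounded measurable function. Define Ψ(u) = (1+u)·log(1+u) − u for u > −1. Then lim_{ε→0⁺} ε^{−2} · ∫₀¹ ∫_{−1}^{1} Ψ( ε·g(t)·x ) · |x|^{−1−α} dx dt = (1/(2−α)) · ∫₀¹ g(t)² dt. -/
open MeasureTheory Filter Set Topology intervalIntegral

noncomputable section

lemma log_bd {u : ℝ} (hu : |u| ≤ 1/2) : |Real.log (1+u) - u| ≤ 2 * u^2 := by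
  have h1 : |(-u)| < 1 := by rw [abs_neg]; linarith [abs_nonneg u]
  have key := Real.abs_log_sub_add_sum_range_le h1 1
  simp only [Finset.sum_range_one, pow_one, Nat.cast_zero, zero_add, Nat.cast_one,
    sub_neg_eq_add, div_one] at key
  have h2 : |(-u)| ^ (1+1) / (1 - |(-u)|) ≤ 2 * u^2 := by
    rw [abs_neg, sq_abs]
    have h3 : (1:ℝ)/2 ≤ 1 - |u| := by linarith
    rw [div_le_iff₀ (by linarith [abs_nonneg u])]
    nlinarith [sq_nonneg u, abs_nonneg u]
  have heq : |Real.log (1+u) - u| = |-u + Real.log (1 + u)| := by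
    congr 1; ring
  rw [heq]; exact le_trans key h2

-- L1: Taylor bound for Ψ
lemma psi_taylor {u : ℝ} (hu : |u| ≤ 1/2) :
    |((1+u) * Real.log (1+u) - u) - u^2/2| ≤ 2 * |u|^3 := by
  set h : ℝ → ℝ := fun v => (1+v) * Real.log (1+v) - v - v^2/2 with hh
  have hderiv : ∀ v ∈ Set.uIcc 0 u, HasDerivWithinAt h (Real.log (1+v) - v) (Set.uIcc 0 u) v := by
    intro v hv
    have hvb : |v| ≤ 1/2 := by
      rcases Set.mem_uIcc.1 hv with h' | h' <;> rw [abs_le] <;>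
        constructor <;> cases' abs_le.1 hu with l r <;> linarith [h'.1, h'.2]
    have hne : (1:ℝ) + v ≠ 0 := by cases' abs_le.1 hvb with l r; linarith
    have d1 : HasDerivAt (fun v : ℝ => 1 + v) 1 v := by
      simpa using (hasDerivAt_id v).const_add 1
    have d2 : HasDerivAt (fun v : ℝ => Real.log (1+v)) (1/(1+v)) v := by
      simpa using d1.log hne
    have d3 : HasDerivAt h (1 * Real.log (1+v) + (1+v) * (1/(1+v)) - 1 - (2*v/2)) v := by
      have := ((d1.mul d2).sub (hasDerivAt_id v)).sub
        (((hasDerivAt_pow 2 v).div_const 2))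
      exact this.congr_deriv (by norm_num)
    have : (1 * Real.log (1+v) + (1+v) * (1/(1+v)) - 1 - (2*v/2)) = Real.log (1+v) - v := by
      field_simp
      ring
    rw [this] at d3
    exact d3.hasDerivWithinAt
  have hbound : ∀ v ∈ Set.uIcc 0 u, ‖Real.log (1+v) - v‖ ≤ 2 * u^2 := by
    intro v hv
    have hvb : |v| ≤ 1/2 := by
      rcases Set.mem_uIcc.1 hv with h' | h' <;> rw [abs_le] <;>
        constructor <;> cases' abs_le.1 hu with l r <;> linarith [h'.1, h'.2]
    have hvu : v^2 ≤ u^2 := by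
      rcases Set.mem_uIcc.1 hv with h' | h' <;> nlinarith [h'.1, h'.2]
    calc ‖Real.log (1+v) - v‖ ≤ 2 * v^2 := log_bd hvb
      _ ≤ 2 * u^2 := by linarith
  have := (convex_uIcc (0:ℝ) u).norm_image_sub_le_of_norm_hasDerivWithin_le
    hderiv hbound (Set.left_mem_uIcc) (Set.right_mem_uIcc)
  simp only [hh] at this
  have h0 : ((1+(0:ℝ)) * Real.log (1+0) - 0 - 0^2/2) = 0 := by norm_num
  rw [h0, sub_zero] at this
  calc |((1+u) * Real.log (1+u) - u) - u^2/2| ≤ 2*u^2 * ‖u - 0‖ := this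
    _ = 2 * |u|^3 := by rw [sub_zero, Real.norm_eq_abs]; rw [← sq_abs]; ring

lemma intable_abs_rpow {r : ℝ} (hr : -1 < r) (a b : ℝ) :
    IntervalIntegrable (fun x : ℝ => |x| ^ r) volume a b := by
  have key : ∀ c : ℝ, 0 ≤ c → IntervalIntegrable (fun x : ℝ => |x| ^ r) volume 0 c := by
    intro c hc
    rw [intervalIntegrable_iff_integrableOn_Ioc_of_le hc]
    refine ((intervalIntegrable_rpow' hr (a:=0) (b:=c)).1).congr_fun ?_ measurableSet_Ioc
    intro x hx; show x ^ r = |x| ^ r; rw [abs_of_pos hx.1]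
  have key2 : ∀ c : ℝ, IntervalIntegrable (fun x : ℝ => |x| ^ r) volume 0 c := by
    intro c
    rcases le_total 0 c with hc | hc
    · exact key c hc
    · rw [IntervalIntegrable.iff_comp_neg]
      simp only [abs_neg, neg_zero]
      exact (key (-c) (by linarith)).symm.symm
  exact (key2 a).symm.trans (key2 b)

lemma int_abs_rpow {r : ℝ} (hr : -1 < r) (hr' : r + 1 ≠ 0) :
    ∫ x in (-1:ℝ)..1, |x| ^ r = 2 / (r + 1) := by
  have h01 : ∫ x in (0:ℝ)..1, |x| ^ r = 1 / (r + 1) := by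
    rw [intervalIntegral.integral_congr (g := fun x : ℝ => x ^ r)
      (by intro x hx; rw [uIcc_of_le zero_le_one] at hx; simp [abs_of_nonneg hx.1])]
    rw [integral_rpow (Or.inl hr)]
    rw [Real.one_rpow, Real.zero_rpow hr']
    ring
  have hcomp := intervalIntegral.integral_comp_neg (a := (0:ℝ)) (b := 1) (fun x => |x| ^ r)
  simp only [abs_neg, neg_zero, neg_neg] at hcomp
  have hneg : ∫ x in (-1:ℝ)..0, |x| ^ r = 1 / (r + 1) := by rw [← hcomp]; exact h01
  rw [← intervalIntegral.integral_add_adjacent_intervals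
    (intable_abs_rpow hr (-1) 0) (intable_abs_rpow hr 0 1)]
  rw [h01, hneg]; ring

lemma inner_est (α : ℝ) (hα : α ∈ Ioo (1:ℝ) 2) {c : ℝ} (hc : |c| ≤ 1/2) :
    |(∫ x in (-1:ℝ)..1, ((1+c*x)*Real.log (1+c*x) - c*x) * |x| ^ (-1-α)) - c^2/(2-α)|
      ≤ 4 * |c|^3 := by
  obtain ⟨hα1, hα2⟩ := hα
  set f : ℝ → ℝ := fun x => ((1+c*x)*Real.log (1+c*x) - c*x) * |x| ^ (-1-α) with hf
  set A : ℝ → ℝ := fun x => (c^2/2) * |x| ^ (1-α) with hA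
  set E : ℝ → ℝ := fun x => f x - A x with hE
  -- A rewritten
  have hAeq : ∀ x : ℝ, A x = ((c*x)^2/2) * |x| ^ (-1-α) := by
    intro x
    rcases eq_or_ne x 0 with rfl | hx
    · simp [hA, Real.zero_rpow (by linarith : (1:ℝ)-α ≠ 0),
        Real.zero_rpow (by linarith : -1-α ≠ 0)]
    · have hx' : (0:ℝ) < |x| := abs_pos.2 hx
      have : |x| ^ (1-α) = |x| ^ (2:ℝ) * |x| ^ (-1-α) := by
        rw [← Real.rpow_add hx']; ring_nf
      show c ^ 2 / 2 * |x| ^ (1 - α) = (c * x) ^ 2 / 2 * |x| ^ (-1 - α)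
      rw [this, Real.rpow_two]
      have h4 : (c*x)^2 = c^2 * |x|^2 := by rw [mul_pow, sq_abs]
      rw [h4]; ring
  -- bound on E
  have hEbd : ∀ x ∈ Icc (-1:ℝ) 1, |E x| ≤ 2 * |c|^3 := by
    intro x hx
    have hxa : |x| ≤ 1 := abs_le.2 ⟨hx.1, hx.2⟩
    have hcx : |c*x| ≤ 1/2 := by
      rw [abs_mul]
      calc |c| * |x| ≤ (1/2) * 1 := by
            apply mul_le_mul hc hxa (abs_nonneg x) (by norm_num)
        _ = 1/2 := by norm_num
    have htaylor := psi_taylor hcx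
    have : E x = (((1+c*x)*Real.log (1+c*x) - c*x) - (c*x)^2/2) * |x| ^ (-1-α) := by
      rw [hE]; simp only [hf, hAeq x]; ring
    rw [this, abs_mul]
    have h1 : |(|x| ^ (-1-α))| = |x| ^ (-1-α) := abs_of_nonneg (Real.rpow_nonneg (abs_nonneg x) _)
    rw [h1]
    calc |((1+c*x)*Real.log (1+c*x) - c*x) - (c*x)^2/2| * |x| ^ (-1-α)
        ≤ (2 * |c*x|^3) * |x| ^ (-1-α) := by
          apply mul_le_mul_of_nonneg_right htaylor (Real.rpow_nonneg (abs_nonneg x) _)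
      _ = 2 * |c|^3 * (|x|^(3:ℝ) * |x| ^ (-1-α)) := by
          rw [abs_mul, mul_pow, ← Real.rpow_natCast |x| 3]; push_cast; ring
      _ ≤ 2 * |c|^3 := by
          have h2 : |x|^(3:ℝ) * |x| ^ (-1-α) ≤ 1 := by
            rcases eq_or_ne x 0 with rfl | hx0
            · simp [Real.zero_rpow (by norm_num : (3:ℝ) ≠ 0)]
            · rw [← Real.rpow_add (abs_pos.2 hx0)]
              apply Real.rpow_le_one (abs_nonneg x) hxa (by linarith)
          nlinarith [pow_nonneg (abs_nonneg c) 3, h2]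
  -- measurability of f
  have hmf : Measurable f := by
    rw [hf]; fun_prop
  have hmA : Measurable A := by rw [hA]; fun_prop
  have hAint : IntervalIntegrable A volume (-1) 1 :=
    (intable_abs_rpow (by linarith : (-1:ℝ) < 1 - α) (-1) 1).const_mul _
  have hEint : IntervalIntegrable E volume (-1) 1 := by
    rw [intervalIntegrable_iff_integrableOn_Ioc_of_le (by norm_num : (-1:ℝ) ≤ 1)]
    apply Integrable.mono' (g := fun _ : ℝ => 2 * |c|^3)
      (integrableOn_const measure_Ioc_lt_top.ne)
      ((hmf.sub hmA).aestronglyMeasurable.restrict)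
    filter_upwards [ae_restrict_mem measurableSet_Ioc] with x hx
    rw [Real.norm_eq_abs]
    exact hEbd x (Ioc_subset_Icc_self hx)
  have hsplit : ∫ x in (-1:ℝ)..1, f x = (∫ x in (-1:ℝ)..1, A x) + ∫ x in (-1:ℝ)..1, E x := by
    rw [← intervalIntegral.integral_add hAint hEint]
    apply intervalIntegral.integral_congr
    intro x _
    simp only [hE]; ring
  have hAval : ∫ x in (-1:ℝ)..1, A x = c^2/(2-α) := by
    rw [hA]
    rw [intervalIntegral.integral_const_mul]
    rw [int_abs_rpow (by linarith) (by intro h; apply (by linarith : (2:ℝ) - α ≠ 0); linarith)]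
    have : (1:ℝ) - α + 1 = 2 - α := by ring
    rw [this]
    field_simp
  have hEbound : |∫ x in (-1:ℝ)..1, E x| ≤ 4 * |c|^3 := by
    have := intervalIntegral.norm_integral_le_of_norm_le_const
      (C := 2 * |c|^3) (f := E) (a := (-1:ℝ)) (b := 1) ?_
    · rw [Real.norm_eq_abs] at this
      calc |∫ x in (-1:ℝ)..1, E x| ≤ 2*|c|^3 * |1 - (-1)| := this
        _ = 4 * |c|^3 := by norm_num; ring
    · intro x hx
      rw [Set.uIoc_of_le (by norm_num : (-1:ℝ) ≤ 1)] at hx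
      rw [Real.norm_eq_abs]
      exact hEbd x (Ioc_subset_Icc_self hx)
  calc |(∫ x in (-1:ℝ)..1, f x) - c^2/(2-α)| = |∫ x in (-1:ℝ)..1, E x| := by
        rw [hsplit, hAval]; congr 1; ring
    _ ≤ 4 * |c|^3 := hEbound

/-- For `Ψ(u) = (1+u)log(1+u) - u`, `α ∈ (1,2)` and a bounded measurable `g`:
`lim_{ε→0⁺} ε^{-2} ∫₀¹∫_{-1}^{1} Ψ(ε g(t) x)|x|^{-1-α} dx dt
   = (1/(2-α)) ∫₀¹ g(t)² dt`. -/
theorem psi_small_parameter_limit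
    (α : ℝ) (hα : α ∈ Ioo (1:ℝ) 2)
    (g : ℝ → ℝ) (hg : Measurable g) (M : ℝ) (hM : ∀ t ∈ Icc (0:ℝ) 1, |g t| ≤ M)
    (Ψ : ℝ → ℝ) (hΨ : ∀ u : ℝ, -1 < u → Ψ u = (1 + u) * Real.log (1 + u) - u) :
    Tendsto (fun ε : ℝ => ε ^ (-2 : ℝ) *
        ∫ t in Icc (0:ℝ) 1, ∫ x in (-1:ℝ)..1, Ψ (ε * g t * x) * |x| ^ (-1 - α))
      (𝓝[>] (0:ℝ)) (𝓝 ((1 / (2 - α)) * ∫ t in Icc (0:ℝ) 1, g t ^ 2)) := by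
  obtain ⟨hα1, hα2⟩ := hα
  have h2α : (0:ℝ) < 2 - α := by linarith
  have hM0 : 0 ≤ M := le_trans (abs_nonneg _) (hM 0 ⟨le_rfl, zero_le_one⟩)
  set G : ℝ := ∫ t in Icc (0:ℝ) 1, g t ^ 2 with hG
  set L : ℝ := (1/(2-α)) * G with hL
  set δ : ℝ := min 1 (1/(2*(M+1))) with hδ
  have hδpos : 0 < δ := lt_min one_pos (by positivity)
  -- integrability of g^2
  have hg2int : IntegrableOn (fun t => g t ^ 2) (Icc (0:ℝ) 1) volume := by
    apply Integrable.mono' (g := fun _ : ℝ => M^2)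
      (integrableOn_const measure_Icc_lt_top.ne)
      ((hg.pow_const 2).aestronglyMeasurable.restrict)
    filter_upwards [ae_restrict_mem measurableSet_Icc] with t ht
    rw [Real.norm_eq_abs, abs_pow]
    exact pow_le_pow_left₀ (abs_nonneg _) (hM t ht) 2
  -- main estimate
  have hKey : ∀ ε ∈ Ioo (0:ℝ) δ,
      |ε ^ (-2:ℝ) * (∫ t in Icc (0:ℝ) 1, ∫ x in (-1:ℝ)..1, Ψ (ε * g t * x) * |x| ^ (-1 - α)) - L|
        ≤ 4 * M^3 * ε := by
    intro ε hε
    obtain ⟨hε0, hεδ⟩ := hε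
    have hεM : ∀ t ∈ Icc (0:ℝ) 1, |ε * g t| ≤ 1/2 := by
      intro t ht
      have h1 : |ε * g t| = ε * |g t| := by rw [abs_mul, abs_of_pos hε0]
      have h2 : ε * |g t| ≤ ε * M := by
        exact mul_le_mul_of_nonneg_left (hM t ht) hε0.le
      have h3 : ε ≤ 1/(2*(M+1)) := le_of_lt (lt_of_lt_of_le hεδ (min_le_right _ _))
      have h4 : ε * M ≤ (1/(2*(M+1))) * M := mul_le_mul_of_nonneg_right h3 hM0
      have h5 : (1/(2*(M+1))) * M ≤ 1/2 := by
        rw [div_mul_eq_mul_div, div_le_div_iff₀ (by positivity) (by norm_num)]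
        nlinarith
      linarith
    set F : ℝ → ℝ → ℝ := fun t x =>
      ((1 + ε * g t * x) * Real.log (1 + ε * g t * x) - ε * g t * x) * |x| ^ (-1 - α) with hF
    set I : ℝ → ℝ := fun t => ∫ x in (-1:ℝ)..1, F t x with hI
    -- congr: replace Ψ by its formula
    have hcongr : ∫ t in Icc (0:ℝ) 1, (∫ x in (-1:ℝ)..1, Ψ (ε * g t * x) * |x| ^ (-1 - α))
        = ∫ t in Icc (0:ℝ) 1, I t := by
      apply setIntegral_congr_fun measurableSet_Icc
      intro t ht
      apply intervalIntegral.integral_congr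
      intro x hx
      rw [uIcc_of_le (by norm_num : (-1:ℝ) ≤ 1)] at hx
      have hxa : |x| ≤ 1 := abs_le.2 ⟨hx.1, hx.2⟩
      have hu : |ε * g t * x| ≤ 1/2 := by
        rw [abs_mul]
        calc |ε * g t| * |x| ≤ (1/2) * 1 :=
              mul_le_mul (hεM t ht) hxa (abs_nonneg x) (by norm_num)
          _ = 1/2 := by norm_num
      have hu1 : (-1:ℝ) < ε * g t * x := by
        cases' abs_le.1 hu with l r; linarith
      show Ψ (ε * g t * x) * |x| ^ (-1 - α) = F t x
      simp only [hF]
      rw [hΨ _ hu1]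
    -- measurability of I
    have hsm : StronglyMeasurable I := by
      have hImeq : I = fun t => ∫ x in Ioc (-1:ℝ) 1, F t x := by
        funext t
        rw [hI]
        exact intervalIntegral.integral_of_le (by norm_num)
      rw [hImeq]
      have hFj : Measurable (fun p : ℝ × ℝ => F p.1 p.2) := by
        simp only [hF]
        have hgx : Measurable fun p : ℝ × ℝ => ε * g p.1 * p.2 :=
          ((hg.comp measurable_fst).const_mul ε).mul measurable_snd
        have h1 : Measurable fun p : ℝ × ℝ => (1 + ε * g p.1 * p.2) *
            Real.log (1 + ε * g p.1 * p.2) - ε * g p.1 * p.2 :=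
          ((measurable_const.add hgx).mul
            (Real.measurable_log.comp (measurable_const.add hgx))).sub hgx
        exact h1.mul (by fun_prop : Measurable fun p : ℝ × ℝ => |p.2| ^ (-1-α))
      exact hFj.stronglyMeasurable.integral_prod_right'
    -- estimate from inner_est
    have hest : ∀ t ∈ Icc (0:ℝ) 1, |I t - (ε * g t)^2/(2-α)| ≤ 4 * (ε*M)^3 := by
      intro t ht
      have := inner_est α ⟨hα1, hα2⟩ (hεM t ht)
      refine le_trans this ?_
      have h1 : |ε * g t| ≤ ε * M := by
        rw [abs_mul, abs_of_pos hε0]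
        exact mul_le_mul_of_nonneg_left (hM t ht) hε0.le
      have := pow_le_pow_left₀ (abs_nonneg _) h1 3
      linarith
    -- integrability of I
    have hIint : IntegrableOn I (Icc (0:ℝ) 1) volume := by
      apply Integrable.mono' (g := fun _ : ℝ => (ε*M)^2/(2-α) + 4*(ε*M)^3)
        (integrableOn_const measure_Icc_lt_top.ne)
        (hsm.aestronglyMeasurable.restrict)
      filter_upwards [ae_restrict_mem measurableSet_Icc] with t ht
      rw [Real.norm_eq_abs]
      have h1 := hest t ht
      have h2 : (ε * g t)^2/(2-α) ≤ (ε*M)^2/(2-α) := by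
        apply div_le_div_of_nonneg_right _ h2α.le
        have h1 : |ε * g t| ≤ ε * M := by
          rw [abs_mul, abs_of_pos hε0]
          exact mul_le_mul_of_nonneg_left (hM t ht) hε0.le
        calc (ε * g t)^2 = |ε * g t|^2 := (sq_abs _).symm
          _ ≤ (ε*M)^2 := pow_le_pow_left₀ (abs_nonneg _) h1 2
      have h3 : 0 ≤ (ε * g t)^2/(2-α) := div_nonneg (sq_nonneg _) h2α.le
      calc |I t| ≤ |I t - (ε * g t)^2/(2-α)| + |(ε * g t)^2/(2-α)| := by
            have := abs_sub_abs_le_abs_sub (I t) ((ε * g t)^2/(2-α))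
            have := abs_add_le (I t - (ε * g t)^2/(2-α)) ((ε * g t)^2/(2-α))
            simp only [sub_add_cancel] at this
            linarith
        _ ≤ (ε*M)^2/(2-α) + 4*(ε*M)^3 := by
            rw [abs_of_nonneg h3]; linarith
    -- put it together
    set J : ℝ := ∫ t in Icc (0:ℝ) 1, I t with hJdef
    have hdint : IntegrableOn (fun t => I t - (ε^2/(2-α)) * g t^2) (Icc (0:ℝ) 1) volume :=
      hIint.sub (hg2int.const_mul _)
    have hsub : ∫ t in Icc (0:ℝ) 1, (I t - (ε^2/(2-α)) * g t ^2)
        = J - (ε^2/(2-α)) * G := by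
      rw [integral_sub hIint (hg2int.const_mul _), MeasureTheory.integral_const_mul, ← hJdef, ← hG]
    have hptbd : ∀ t ∈ Icc (0:ℝ) 1, ‖I t - (ε^2/(2-α)) * g t^2‖ ≤ 4*(ε*M)^3 := by
      intro t ht
      rw [Real.norm_eq_abs]
      have heq : (ε^2/(2-α)) * g t ^2 = (ε*g t)^2/(2-α) := by ring
      rw [heq]
      exact hest t ht
    have hJbd : |J - (ε^2/(2-α)) * G| ≤ 4*(ε*M)^3 := by
      have hbig := norm_setIntegral_le_of_norm_le_const (μ := volume) (s := Icc (0:ℝ) 1)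
        measure_Icc_lt_top hptbd
      rw [hsub, Real.norm_eq_abs] at hbig
      simpa [Real.volume_real_Icc] using hbig
    rw [hcongr]
    have hrpow : ε^(-2:ℝ) = (ε^2)⁻¹ := by
      rw [show (-2:ℝ) = -(2:ℝ) by norm_num, Real.rpow_neg hε0.le, Real.rpow_two, sq]
    have hε2 : (ε:ℝ)^2 ≠ 0 := by positivity
    have h2ne : (2:ℝ) - α ≠ 0 := h2α.ne'
    calc |ε^(-2:ℝ) * J - L| = (ε^2)⁻¹ * |J - (ε^2/(2-α))*G| := by
          have heq : ε^(-2:ℝ) * J - L = (ε^2)⁻¹ * (J - (ε^2/(2-α))*G) := by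
            rw [hrpow, hL]
            field_simp
          rw [heq, abs_mul, abs_of_pos (show (0:ℝ) < (ε^2)⁻¹ by positivity)]
      _ ≤ (ε^2)⁻¹ * (4*(ε*M)^3) := mul_le_mul_of_nonneg_left hJbd (by positivity)
      _ = 4*M^3*ε := by field_simp
  -- conclude the limit
  have hev : ∀ᶠ ε in 𝓝[>] (0:ℝ),
      |(ε ^ (-2:ℝ) * ∫ t in Icc (0:ℝ) 1, ∫ x in (-1:ℝ)..1, Ψ (ε * g t * x) * |x| ^ (-1 - α)) - L|
        ≤ 4*M^3*ε := by
    filter_upwards [Ioo_mem_nhdsGT hδpos] with ε hε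
    exact hKey ε hε
  have h0 : Tendsto (fun ε : ℝ => 4*M^3*ε) (𝓝[>] (0:ℝ)) (𝓝 0) := by
    have : Tendsto (fun ε : ℝ => 4*M^3*ε) (𝓝 (0:ℝ)) (𝓝 (4*M^3*0)) :=
      (continuous_const.mul continuous_id).tendsto 0
    simp only [mul_zero] at this
    exact this.mono_left nhdsWithin_le_nhds
  have habs : Tendsto (fun ε : ℝ =>
      |(ε ^ (-2:ℝ) * ∫ t in Icc (0:ℝ) 1, ∫ x in (-1:ℝ)..1, Ψ (ε * g t * x) * |x| ^ (-1 - α)) - L|)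
      (𝓝[>] (0:ℝ)) (𝓝 0) :=
    squeeze_zero' (Eventually.of_forall fun _ => abs_nonneg _) hev h0
  have hsub : Tendsto (fun ε : ℝ =>
      (ε ^ (-2:ℝ) * ∫ t in Icc (0:ℝ) 1, ∫ x in (-1:ℝ)..1, Ψ (ε * g t * x) * |x| ^ (-1 - α)) - L)
      (𝓝[>] (0:ℝ)) (𝓝 0) := by
    rwa [tendsto_zero_iff_abs_tendsto_zero]
  have := hsub.add_const L
  simpa using this
end
end
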